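/- arXiv:2401.12828 — 5 statements merged into one kernel-verified Lean document; each statement's English description precedes it below -/
import Mathlib

section
/- Let C > 0. For every ε > 0 there exists R₀ > 0 such that for every family (a_k)_{k∈πℤ³} of complex numbers with ∑_{k∈πℤ³} |a_k|² ≤ C and every R ≥ R₀: ∫_{S²} ∑_{k∈πℤ³, |k|>R} |a_k|² · sinc²(⟨k,n⟩) dσ(n) < ε, where sinc(s) = sin(s)/s for s ≠ 0 and sinc(0) = 1, and ⟨k,n⟩ is the Euclidean inner product of k ∈ ℝ³ and n ∈ S². -/
open MeasureTheory Real Filter Topology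

noncomputable section

abbrev E3 := EuclideanSpace ℝ (Fin 3)

/-- The surface measure on the unit sphere `S² ⊂ ℝ³` (total mass `4π`). -/
def sphereμ : Measure E3 := (μH[2]).restrict (Metric.sphere (0 : E3) 1)

/-- The lattice vector `π k ∈ π ℤ³ ⊂ ℝ³` associated to `k : Fin 3 → ℤ`. -/
def latticeVec (k : Fin 3 → ℤ) : E3 :=
  (EuclideanSpace.equiv (Fin 3) ℝ).symm (fun i => π * (k i : ℝ))

/-- `sinc s = sin s / s` for `s ≠ 0`, and `sinc 0 = 1`. -/
def sinc (s : ℝ) : ℝ := if s = 0 then 1 else Real.sin s / s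

open Set

section Aux

lemma sinc_sq_le_one (s : ℝ) : _root_.sinc s ^ 2 ≤ 1 := by
  rcases eq_or_ne s 0 with rfl | h
  · simp [_root_.sinc]
  · rw [_root_.sinc, if_neg h, div_pow, div_le_one (by positivity)]
    exact Real.sin_sq_le_sq

lemma sinc_sq_le_inv (s : ℝ) (h : s ≠ 0) : _root_.sinc s ^ 2 ≤ 1 / s ^ 2 := by
  rw [_root_.sinc, if_neg h, div_pow]
  have h2 : (0:ℝ) < s ^ 2 := by positivity
  exact div_le_div_of_nonneg_right (Real.sin_sq_le_one s) h2.le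

lemma sinc_nonneg_sq (s : ℝ) : 0 ≤ _root_.sinc s ^ 2 := sq_nonneg _

lemma continuous_sinc : Continuous _root_.sinc := by
  rw [continuous_iff_continuousAt]
  intro x
  rcases eq_or_ne x 0 with rfl | hx
  · have h1 : Tendsto (fun s => Real.sin s / s) (𝓝[≠] 0) (𝓝 1) := by
      have h := (Real.hasDerivAt_sin 0)
      rw [hasDerivAt_iff_tendsto_slope] at h
      simp only [Real.cos_zero] at h
      apply h.congr'
      filter_upwards [self_mem_nhdsWithin] with s hs
      simp [slope, Real.sin_zero, div_eq_inv_mul]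
    have h2 : Tendsto _root_.sinc (𝓝[≠] 0) (𝓝 1) := by
      apply h1.congr'
      filter_upwards [self_mem_nhdsWithin] with s hs
      rw [_root_.sinc, if_neg (show s ≠ 0 from hs)]
    unfold ContinuousAt
    rw [show _root_.sinc 0 = 1 by simp [_root_.sinc]]
    rw [← nhdsNE_sup_pure (0:ℝ)]
    exact h2.sup (by simpa [_root_.sinc] using tendsto_pure_nhds _root_.sinc 0)
  · apply ContinuousAt.congr (f := fun s => Real.sin s / s)
    · exact (Real.continuous_sin.continuousAt).div continuousAt_id hx
    · exact Filter.eventuallyEq_of_mem (isOpen_compl_singleton.mem_nhds hx) fun s hs => by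
        rw [_root_.sinc, if_neg (show s ≠ 0 from hs)]


def permMap (θ : Equiv.Perm (Fin 3)) : E3 → E3 :=
  fun x => (EuclideanSpace.equiv (Fin 3) ℝ).symm (fun i => x (θ i))

lemma permMap_apply (θ : Equiv.Perm (Fin 3)) (x : E3) (i : Fin 3) :
    permMap θ x i = x (θ i) := rfl

lemma isometry_permMap (θ : Equiv.Perm (Fin 3)) : Isometry (permMap θ) := by
  apply Isometry.of_dist_eq
  intro x y
  rw [EuclideanSpace.dist_eq, EuclideanSpace.dist_eq]
  congr 1
  exact Equiv.sum_comp θ (fun i => dist (x i) (y i) ^ 2)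

def flipMap : E3 → E3 :=
  fun x => (EuclideanSpace.equiv (Fin 3) ℝ).symm (fun i => if i = 2 then -x i else x i)

lemma flipMap_apply (x : E3) (i : Fin 3) :
    flipMap x i = if i = 2 then -x i else x i := rfl

lemma isometry_flipMap : Isometry flipMap := by
  apply Isometry.of_dist_eq
  intro x y
  rw [EuclideanSpace.dist_eq, EuclideanSpace.dist_eq]
  congr 1
  refine Finset.sum_congr rfl fun i _ => ?_
  rcases eq_or_ne i 2 with rfl | h
  · simp [flipMap_apply, Real.dist_eq, abs_sub_comm, neg_sub_neg]
  · simp [flipMap_apply, h]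

lemma norm_of_isometry {f : E3 → E3} (hf : Isometry f) (h0 : f 0 = 0) (x : E3) :
    ‖f x‖ = ‖x‖ := by
  have := hf.dist_eq x 0
  rwa [h0, dist_zero_right, dist_zero_right] at this

lemma permMap_zero (θ : Equiv.Perm (Fin 3)) : permMap θ 0 = 0 := rfl
lemma flipMap_zero : flipMap 0 = 0 := by
  ext i; rw [flipMap_apply]; simp

-- graph map
def grMap : (Fin 2 → ℝ) → E3 :=
  fun p => (EuclideanSpace.equiv (Fin 3) ℝ).symm ![p 0, p 1, Real.sqrt (1 - p 0 ^ 2 - p 1 ^ 2)]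

lemma grMap_apply (p : Fin 2 → ℝ) :
    (grMap p 0 = p 0 ∧ grMap p 1 = p 1) ∧ grMap p 2 = Real.sqrt (1 - p 0 ^ 2 - p 1 ^ 2) :=
  ⟨⟨rfl, rfl⟩, rfl⟩

lemma sqrt_diff_le {a b : ℝ} (ha : 1/4 ≤ a) (hb : 1/4 ≤ b) :
    |Real.sqrt a - Real.sqrt b| ≤ |a - b| := by
  have ha0 : (0:ℝ) ≤ a := by linarith
  have hb0 : (0:ℝ) ≤ b := by linarith
  have h1 : (1:ℝ)/2 ≤ Real.sqrt a := by
    rw [show (1:ℝ)/2 = Real.sqrt (1/4) by rw [show (1:ℝ)/4 = (1/2)^2 by norm_num, Real.sqrt_sq (by norm_num)]]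
    exact Real.sqrt_le_sqrt ha
  have h2 : (1:ℝ)/2 ≤ Real.sqrt b := by
    rw [show (1:ℝ)/2 = Real.sqrt (1/4) by rw [show (1:ℝ)/4 = (1/2)^2 by norm_num, Real.sqrt_sq (by norm_num)]]
    exact Real.sqrt_le_sqrt hb
  have key : (Real.sqrt a - Real.sqrt b) * (Real.sqrt a + Real.sqrt b) = a - b := by
    have := Real.sq_sqrt ha0
    have := Real.sq_sqrt hb0
    nlinarith [Real.sq_sqrt ha0, Real.sq_sqrt hb0]
  calc |Real.sqrt a - Real.sqrt b| ≤ |Real.sqrt a - Real.sqrt b| * (Real.sqrt a + Real.sqrt b) :=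
        le_mul_of_one_le_right (abs_nonneg _) (by linarith)
    _ = |(Real.sqrt a - Real.sqrt b) * (Real.sqrt a + Real.sqrt b)| := by
        rw [abs_mul, abs_of_nonneg (by linarith : (0:ℝ) ≤ Real.sqrt a + Real.sqrt b)]
    _ = |a - b| := by rw [key]

lemma grMap_lip : LipschitzOnWith 5 grMap {p : Fin 2 → ℝ | p 0 ^ 2 + p 1 ^ 2 ≤ 3/4} := by
  apply LipschitzOnWith.of_dist_le_mul
  intro p hp q hq
  simp only [Set.mem_setOf_eq] at hp hq
  set d := dist p q with hd
  have hd0 : 0 ≤ d := dist_nonneg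
  have h0 : |p 0 - q 0| ≤ d := by
    rw [← Real.dist_eq]; exact dist_le_pi_dist p q 0
  have h1 : |p 1 - q 1| ≤ d := by
    rw [← Real.dist_eq]; exact dist_le_pi_dist p q 1
  have hp0 : |p 0| ≤ 1 := by nlinarith [sq_nonneg (p 1), abs_nonneg (p 0), sq_abs (p 0)]
  have hp1 : |p 1| ≤ 1 := by nlinarith [sq_nonneg (p 0), abs_nonneg (p 1), sq_abs (p 1)]
  have hq0 : |q 0| ≤ 1 := by nlinarith [sq_nonneg (q 1), abs_nonneg (q 0), sq_abs (q 0)]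
  have hq1 : |q 1| ≤ 1 := by nlinarith [sq_nonneg (q 0), abs_nonneg (q 1), sq_abs (q 1)]
  have e2 : |p 0 + q 0| ≤ 2 := (abs_add_le _ _).trans (by linarith)
  have e3 : |p 1 + q 1| ≤ 2 := (abs_add_le _ _).trans (by linarith)
  have m0 : |p 0 ^ 2 - q 0 ^ 2| ≤ 2 * d := by
    rw [show p 0 ^ 2 - q 0 ^ 2 = (p 0 - q 0) * (p 0 + q 0) by ring, abs_mul]
    calc |p 0 - q 0| * |p 0 + q 0| ≤ d * 2 := mul_le_mul h0 e2 (abs_nonneg _) hd0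
      _ = 2 * d := by ring
  have m1 : |p 1 ^ 2 - q 1 ^ 2| ≤ 2 * d := by
    rw [show p 1 ^ 2 - q 1 ^ 2 = (p 1 - q 1) * (p 1 + q 1) by ring, abs_mul]
    calc |p 1 - q 1| * |p 1 + q 1| ≤ d * 2 := mul_le_mul h1 e3 (abs_nonneg _) hd0
      _ = 2 * d := by ring
  have hz : |Real.sqrt (1 - p 0 ^ 2 - p 1 ^ 2) - Real.sqrt (1 - q 0 ^ 2 - q 1 ^ 2)| ≤ 4 * d := by
    refine (sqrt_diff_le (a := 1 - p 0 ^ 2 - p 1 ^ 2) (b := 1 - q 0 ^ 2 - q 1 ^ 2)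
      (by linarith) (by linarith)).trans ?_
    rw [show (1 - p 0 ^ 2 - p 1 ^ 2) - (1 - q 0 ^ 2 - q 1 ^ 2)
        = -((p 0 ^ 2 - q 0 ^ 2) + (p 1 ^ 2 - q 1 ^ 2)) by ring, abs_neg]
    exact (abs_add_le _ _).trans (by linarith)
  rw [EuclideanSpace.dist_eq]
  have key : ∑ i, dist (grMap p i) (grMap q i) ^ 2 ≤ (5 * d) ^ 2 := by
    rw [Fin.sum_univ_three]
    have g0 : dist (grMap p 0) (grMap q 0) = |p 0 - q 0| := by
      rw [Real.dist_eq, (grMap_apply p).1.1, (grMap_apply q).1.1]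
    have g1 : dist (grMap p 1) (grMap q 1) = |p 1 - q 1| := by
      rw [Real.dist_eq, (grMap_apply p).1.2, (grMap_apply q).1.2]
    have g2 : dist (grMap p 2) (grMap q 2)
        = |Real.sqrt (1 - p 0 ^ 2 - p 1 ^ 2) - Real.sqrt (1 - q 0 ^ 2 - q 1 ^ 2)| := by
      rw [Real.dist_eq, (grMap_apply p).2, (grMap_apply q).2]
    rw [g0, g1, g2]
    have s0 : |p 0 - q 0| ^ 2 ≤ d ^ 2 := pow_le_pow_left₀ (abs_nonneg _) h0 2
    have s1 : |p 1 - q 1| ^ 2 ≤ d ^ 2 := pow_le_pow_left₀ (abs_nonneg _) h1 2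
    have s2 : |Real.sqrt (1 - p 0 ^ 2 - p 1 ^ 2) - Real.sqrt (1 - q 0 ^ 2 - q 1 ^ 2)| ^ 2
        ≤ (4 * d) ^ 2 := pow_le_pow_left₀ (abs_nonneg _) hz 2
    nlinarith [s0, s1, s2]
  have hco : ((5 : NNReal) : ℝ) = 5 := by norm_num
  rw [hco]
  calc Real.sqrt (∑ i, dist (grMap p i) (grMap q i) ^ 2) ≤ Real.sqrt ((5 * d) ^ 2) :=
        Real.sqrt_le_sqrt key
    _ = 5 * d := Real.sqrt_sq (by linarith)


lemma norm_sq_eq (n : E3) (hn : n ∈ Metric.sphere (0:E3) 1) :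
    n 0 ^ 2 + n 1 ^ 2 + n 2 ^ 2 = 1 := by
  rw [Metric.mem_sphere, dist_zero_right] at hn
  have := congrArg (· ^ 2) hn
  simp only [one_pow] at this
  rw [EuclideanSpace.norm_eq, Real.sq_sqrt (by positivity)] at this
  rw [Fin.sum_univ_three] at this
  simpa [Real.norm_eq_abs, sq_abs] using this

def P0 (lam : ℝ) : Set E3 :=
  {n | n ∈ Metric.sphere (0:E3) 1 ∧ |n 0| ≤ lam ∧ 1/2 ≤ n 2}

lemma P0_subset (lam : ℝ) :
    P0 lam ⊆ grMap '' ({p | p 0 ^ 2 + p 1 ^ 2 ≤ 3/4} ∩ {p | |p 0| ≤ lam ∧ |p 1| ≤ 1}) := by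
  rintro n ⟨hn, h0, h2⟩
  have hsq := norm_sq_eq n hn
  refine ⟨![n 0, n 1], ⟨?_, ?_, ?_⟩, ?_⟩
  · show n 0 ^ 2 + n 1 ^ 2 ≤ 3/4
    nlinarith
  · show |n 0| ≤ lam; exact h0
  · show |n 1| ≤ 1
    rw [abs_le]; constructor <;> nlinarith
  · ext i
    fin_cases i
    · exact (grMap_apply _).1.1
    · exact (grMap_apply _).1.2
    · show grMap ![n 0, n 1] 2 = n 2
      rw [(grMap_apply _).2]
      show Real.sqrt (1 - n 0 ^ 2 - n 1 ^ 2) = n 2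
      rw [show 1 - n 0 ^ 2 - n 1 ^ 2 = n 2 ^ 2 by linarith, Real.sqrt_sq (by linarith)]

lemma box_measure (lam : ℝ) (h0 : 0 ≤ lam) :
    μH[2] ({p : Fin 2 → ℝ | |p 0| ≤ lam ∧ |p 1| ≤ 1}) = ENNReal.ofReal (2*lam) * ENNReal.ofReal 2 := by
  have hset : {p : Fin 2 → ℝ | |p 0| ≤ lam ∧ |p 1| ≤ 1}
      = Set.pi Set.univ ![Icc (-lam) lam, Icc (-1) 1] := by
    ext p
    simp only [Set.mem_setOf_eq, Set.mem_pi, Set.mem_univ, forall_true_left]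
    rw [Fin.forall_fin_two]
    simp [abs_le]
  have hcard : μH[(2:ℝ)] = (volume : Measure (Fin 2 → ℝ)) := by
    have := hausdorffMeasure_pi_real (ι := Fin 2)
    simpa using this
  rw [hset, hcard, volume_pi_pi]
  rw [Fin.prod_univ_two]
  simp [Real.volume_Icc]
  rw [show lam + lam = 2 * lam by ring]
  congr 1
  rw [ENNReal.ofReal_mul (by norm_num), ENNReal.ofReal_ofNat]
  rw [show (1:ℝ) + 1 = 2 by norm_num]
  exact ENNReal.ofReal_ofNat 2

lemma P0_bound (lam : ℝ) (h0 : 0 ≤ lam) : μH[2] (P0 lam) ≤ ENNReal.ofReal (100 * lam) := by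
  set s : Set (Fin 2 → ℝ) := {p | p 0 ^ 2 + p 1 ^ 2 ≤ 3/4} ∩ {p | |p 0| ≤ lam ∧ |p 1| ≤ 1}
  have h1 : μH[2] (P0 lam) ≤ μH[2] (grMap '' s) := measure_mono (P0_subset lam)
  have h2 : μH[(2:ℝ)] (grMap '' s) ≤ (5:NNReal) ^ (2:ℝ) * μH[2] s :=
    (grMap_lip.mono Set.inter_subset_left).hausdorffMeasure_image_le (by norm_num)
  have h3 : μH[(2:ℝ)] s ≤ ENNReal.ofReal (2*lam) * ENNReal.ofReal 2 := by
    rw [← box_measure lam h0]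
    exact measure_mono Set.inter_subset_right
  have h4 : ((5:NNReal) : ENNReal) ^ (2:ℝ) = (25 : ENNReal) := by
    rw [show (2:ℝ) = ((2:ℕ):ℝ) by norm_num, ENNReal.rpow_natCast]
    norm_num
  calc μH[2] (P0 lam) ≤ (5:NNReal) ^ (2:ℝ) * μH[2] s := h1.trans h2
    _ ≤ 25 * (ENNReal.ofReal (2*lam) * ENNReal.ofReal 2) := by
        rw [h4]; exact mul_le_mul_right h3 25
    _ = ENNReal.ofReal (100 * lam) := by
        rw [← ENNReal.ofReal_mul (by linarith), show (25 : ENNReal) = ENNReal.ofReal 25 by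
          rw [ENNReal.ofReal_ofNat], ← ENNReal.ofReal_mul (by norm_num)]
        congr 1; ring

lemma mem_sphere_iso {f : E3 → E3} (hf : Isometry f) (h0 : f 0 = 0) (x : E3) :
    f x ∈ Metric.sphere (0:E3) 1 ↔ x ∈ Metric.sphere (0:E3) 1 := by
  simp only [mem_sphere_zero_iff_norm, norm_of_isometry hf h0]

lemma band0_bound (lam : ℝ) (h0 : 0 ≤ lam) (h1 : lam ≤ 3/5) :
    μH[2] {n : E3 | n ∈ Metric.sphere (0:E3) 1 ∧ |n 0| ≤ lam} ≤ ENNReal.ofReal (400 * lam) := by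
  set τ : E3 → E3 := permMap (Equiv.swap 1 2) with hτ
  have hτiso : Isometry τ := isometry_permMap _
  have hφiso : Isometry flipMap := isometry_flipMap
  have hττ : ∀ x : E3, τ (τ x) = x := by
    intro x; ext i
    show x (Equiv.swap 1 2 (Equiv.swap 1 2 i)) = x i
    rw [Equiv.swap_apply_self]
  have hφφ : ∀ x : E3, flipMap (flipMap x) = x := by
    intro x; ext i
    rcases eq_or_ne i 2 with rfl | h
    · simp [flipMap_apply]
    · simp [flipMap_apply, h]
  have hcover : {n : E3 | n ∈ Metric.sphere (0:E3) 1 ∧ |n 0| ≤ lam}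
      ⊆ P0 lam ∪ flipMap '' P0 lam ∪ τ '' P0 lam ∪ (τ ∘ flipMap) '' P0 lam := by
    rintro n ⟨hn, hn0⟩
    have hsq := norm_sq_eq n hn
    have habs : |n 0| ≤ 3/5 := hn0.trans h1
    have h05 : n 0 ^ 2 ≤ 9/25 := by nlinarith [sq_abs (n 0), abs_nonneg (n 0)]
    have hbig : 1/2 ≤ |n 1| ∨ 1/2 ≤ |n 2| := by
      by_contra hc
      push_neg at hc
      obtain ⟨a, b⟩ := hc
      nlinarith [sq_abs (n 1), sq_abs (n 2), abs_nonneg (n 1), abs_nonneg (n 2)]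
    rcases hbig with hb | hb
    · rcases abs_cases (n 1) with ⟨he, _⟩ | ⟨he, _⟩
      · -- n 1 ≥ 1/2 : n ∈ τ '' P0
        left; right
        refine ⟨τ n, ⟨?_, ?_, ?_⟩, hττ n⟩
        · exact (mem_sphere_iso hτiso (permMap_zero _) n).mpr hn
        · show |n (Equiv.swap 1 2 0)| ≤ lam
          rw [Equiv.swap_apply_of_ne_of_ne (by decide) (by decide)]
          exact hn0
        · show 1/2 ≤ n (Equiv.swap 1 2 2)
          rw [Equiv.swap_apply_right]; linarith
      · -- n 1 ≤ -1/2 : n ∈ (τ ∘ flipMap) '' P0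
        right
        refine ⟨flipMap (τ n), ⟨?_, ?_, ?_⟩, ?_⟩
        · rw [mem_sphere_iso hφiso flipMap_zero, mem_sphere_iso hτiso (permMap_zero _)]
          exact hn
        · show |flipMap (τ n) 0| ≤ lam
          rw [flipMap_apply]
          simp only [show (0 : Fin 3) ≠ 2 by decide, if_neg]
          show |n (Equiv.swap 1 2 0)| ≤ lam
          rw [Equiv.swap_apply_of_ne_of_ne (by decide) (by decide)]
          exact hn0
        · show 1/2 ≤ flipMap (τ n) 2
          rw [flipMap_apply, if_pos rfl]
          show 1/2 ≤ -(n (Equiv.swap 1 2 2))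
          rw [Equiv.swap_apply_right]; linarith
        · show τ (flipMap (flipMap (τ n))) = n
          rw [hφφ, hττ]
    · rcases abs_cases (n 2) with ⟨he, _⟩ | ⟨he, _⟩
      · -- n 2 ≥ 1/2 : n ∈ P0
        left; left; left
        exact ⟨hn, hn0, by linarith⟩
      · -- n 2 ≤ -1/2 : n ∈ flipMap '' P0
        left; left; right
        refine ⟨flipMap n, ⟨?_, ?_, ?_⟩, hφφ n⟩
        · exact (mem_sphere_iso hφiso flipMap_zero n).mpr hn
        · show |flipMap n 0| ≤ lam
          rw [flipMap_apply, if_neg (by decide)]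
          exact hn0
        · show 1/2 ≤ flipMap n 2
          rw [flipMap_apply, if_pos rfl]; linarith
  have e1 : μH[2] (flipMap '' P0 lam) = μH[2] (P0 lam) :=
    hφiso.hausdorffMeasure_image (Or.inl (by norm_num)) _
  have e2 : μH[2] (τ '' P0 lam) = μH[2] (P0 lam) :=
    hτiso.hausdorffMeasure_image (Or.inl (by norm_num)) _
  have e3 : μH[2] ((τ ∘ flipMap) '' P0 lam) = μH[2] (P0 lam) :=
    (hτiso.comp hφiso).hausdorffMeasure_image (Or.inl (by norm_num)) _
  have hP := P0_bound lam h0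
  calc μH[2] {n : E3 | n ∈ Metric.sphere (0:E3) 1 ∧ |n 0| ≤ lam}
      ≤ μH[2] (P0 lam ∪ flipMap '' P0 lam ∪ τ '' P0 lam ∪ (τ ∘ flipMap) '' P0 lam) := measure_mono hcover
    _ ≤ μH[2] (P0 lam ∪ flipMap '' P0 lam ∪ τ '' P0 lam) + μH[2] ((τ ∘ flipMap) '' P0 lam) :=
        measure_union_le _ _
    _ ≤ (μH[2] (P0 lam ∪ flipMap '' P0 lam) + μH[2] (τ '' P0 lam)) + μH[2] ((τ ∘ flipMap) '' P0 lam) := by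
        gcongr; exact measure_union_le _ _
    _ ≤ ((μH[2] (P0 lam) + μH[2] (flipMap '' P0 lam)) + μH[2] (τ '' P0 lam)) + μH[2] ((τ ∘ flipMap) '' P0 lam) := by
        gcongr; exact measure_union_le _ _
    _ = μH[2] (P0 lam) + μH[2] (P0 lam) + μH[2] (P0 lam) + μH[2] (P0 lam) := by rw [e1, e2, e3]
    _ ≤ ENNReal.ofReal (100 * lam) + ENNReal.ofReal (100 * lam) + ENNReal.ofReal (100 * lam)
        + ENNReal.ofReal (100 * lam) := by gcongr
    _ = ENNReal.ofReal (400 * lam) := by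
        rw [← ENNReal.ofReal_add (by linarith) (by linarith),
            ← ENNReal.ofReal_add (by linarith) (by linarith),
            ← ENNReal.ofReal_add (by linarith) (by linarith)]
        congr 1; ring

lemma sphere_bound : μH[2] (Metric.sphere (0:E3) 1) ≤ ENNReal.ofReal 720 := by
  set B : Set E3 := {n : E3 | n ∈ Metric.sphere (0:E3) 1 ∧ |n 0| ≤ 3/5} with hB
  set σ1 : E3 → E3 := permMap (Equiv.swap 0 1) with hσ1
  set σ2 : E3 → E3 := permMap (Equiv.swap 0 2) with hσ2
  have h1iso : Isometry σ1 := isometry_permMap _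
  have h2iso : Isometry σ2 := isometry_permMap _
  have hcover : Metric.sphere (0:E3) 1 ⊆ B ∪ σ1 '' B ∪ σ2 '' B := by
    intro n hn
    have hsq := norm_sq_eq n hn
    have hsome : |n 0| ≤ 3/5 ∨ |n 1| ≤ 3/5 ∨ |n 2| ≤ 3/5 := by
      by_contra hc
      push_neg at hc
      obtain ⟨a, ⟨b, c⟩⟩ := hc
      nlinarith [sq_abs (n 0), sq_abs (n 1), sq_abs (n 2), abs_nonneg (n 0), abs_nonneg (n 1),
        abs_nonneg (n 2)]
    rcases hsome with h | h | h
    · exact Or.inl (Or.inl ⟨hn, h⟩)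
    · refine Or.inl (Or.inr ⟨σ1 n, ⟨?_, ?_⟩, ?_⟩)
      · exact (mem_sphere_iso h1iso (permMap_zero _) n).mpr hn
      · show |n (Equiv.swap 0 1 0)| ≤ 3/5
        rw [Equiv.swap_apply_left]; exact h
      · show σ1 (σ1 n) = n
        ext i
        show n (Equiv.swap 0 1 (Equiv.swap 0 1 i)) = n i
        rw [Equiv.swap_apply_self]
    · refine Or.inr ⟨σ2 n, ⟨?_, ?_⟩, ?_⟩
      · exact (mem_sphere_iso h2iso (permMap_zero _) n).mpr hn
      · show |n (Equiv.swap 0 2 0)| ≤ 3/5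
        rw [Equiv.swap_apply_left]; exact h
      · show σ2 (σ2 n) = n
        ext i
        show n (Equiv.swap 0 2 (Equiv.swap 0 2 i)) = n i
        rw [Equiv.swap_apply_self]
  have hBb : μH[2] B ≤ ENNReal.ofReal 240 := by
    have := band0_bound (3/5) (by norm_num) le_rfl
    rw [show (400:ℝ) * (3/5) = 240 by norm_num] at this
    exact this
  have e1 : μH[2] (σ1 '' B) = μH[2] B := h1iso.hausdorffMeasure_image (Or.inl (by norm_num)) _
  have e2 : μH[2] (σ2 '' B) = μH[2] B := h2iso.hausdorffMeasure_image (Or.inl (by norm_num)) _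
  calc μH[2] (Metric.sphere (0:E3) 1) ≤ μH[2] (B ∪ σ1 '' B ∪ σ2 '' B) := measure_mono hcover
    _ ≤ μH[2] (B ∪ σ1 '' B) + μH[2] (σ2 '' B) := measure_union_le _ _
    _ ≤ (μH[2] B + μH[2] (σ1 '' B)) + μH[2] (σ2 '' B) := by
        gcongr; exact measure_union_le _ _
    _ = μH[2] B + μH[2] B + μH[2] B := by rw [e1, e2]
    _ ≤ ENNReal.ofReal 240 + ENNReal.ofReal 240 + ENNReal.ofReal 240 := by gcongr
    _ = ENNReal.ofReal 720 := by
        rw [← ENNReal.ofReal_add (by norm_num) (by norm_num),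
           ← ENNReal.ofReal_add (by norm_num) (by norm_num)]
        norm_num

lemma band_bound (u : E3) (hu : ‖u‖ = 1) (lam : ℝ) (h0 : 0 ≤ lam) (h1 : lam ≤ 3/5) :
    μH[2] {n : E3 | n ∈ Metric.sphere (0:E3) 1 ∧ |(inner ℝ u n : ℝ)| ≤ lam}
      ≤ ENNReal.ofReal (400 * lam) := by
  set e0 : E3 := EuclideanSpace.single 0 1 with he0
  have he0n : ‖e0‖ = 1 := by
    rw [he0, EuclideanSpace.norm_single]; norm_num
  set r := Submodule.reflection (ℝ ∙ (e0 - u))ᗮ with hr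
  have hre0 : r e0 = u := Submodule.reflection_sub (by rw [he0n, hu])
  have hset : {n : E3 | n ∈ Metric.sphere (0:E3) 1 ∧ |(inner ℝ u n : ℝ)| ≤ lam}
      = r '' {m : E3 | m ∈ Metric.sphere (0:E3) 1 ∧ |m 0| ≤ lam} := by
    ext n
    constructor
    · rintro ⟨hn, hin⟩
      refine ⟨r.symm n, ⟨?_, ?_⟩, by simp⟩
      · rw [mem_sphere_zero_iff_norm] at hn ⊢
        rw [LinearIsometryEquiv.norm_map]; exact hn
      · have : ((r.symm n) 0 : ℝ) = (inner ℝ u n : ℝ) := by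
          have h2 : (inner ℝ u n : ℝ) = (inner ℝ (r e0) (r (r.symm n)) : ℝ) := by simp [hre0]
          rw [h2, LinearIsometryEquiv.inner_map_map]
          rw [he0, EuclideanSpace.inner_single_left]
          simp
        rw [this]; exact hin
    · rintro ⟨m, ⟨hm, hm0⟩, rfl⟩
      constructor
      · rw [mem_sphere_zero_iff_norm, LinearIsometryEquiv.norm_map]
        rwa [mem_sphere_zero_iff_norm] at hm
      · have : (inner ℝ u (r m) : ℝ) = m 0 := by
          rw [← hre0, LinearIsometryEquiv.inner_map_map, he0,
            EuclideanSpace.inner_single_left]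
          simp
        rw [this]; exact hm0
  rw [hset, (r.isometry).hausdorffMeasure_image (Or.inl (by norm_num))]
  exact band0_bound lam h0 h1

lemma sinc_integral_bound (k : E3) (h9 : 9 ≤ ‖k‖) :
    ∫⁻ n, ENNReal.ofReal (_root_.sinc ((inner ℝ k n : ℝ)) ^ 2) ∂sphereμ
      ≤ ENNReal.ofReal (1600 / Real.sqrt ‖k‖) := by
  set R : ℝ := ‖k‖ with hRdef
  have hRpos : 0 < R := by linarith
  have hsR : 3 ≤ Real.sqrt R := by
    rw [show (3:ℝ) = Real.sqrt 9 by rw [show (9:ℝ) = 3^2 by norm_num, Real.sqrt_sq (by norm_num)]]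
    exact Real.sqrt_le_sqrt h9
  have hsRpos : 0 < Real.sqrt R := by linarith
  set lam : ℝ := 1 / Real.sqrt R with hlam
  have hlam0 : 0 ≤ lam := by positivity
  have hlam1 : lam ≤ 3/5 := by
    rw [hlam, div_le_iff₀ hsRpos]; nlinarith
  set u : E3 := R⁻¹ • k with hu
  have hun : ‖u‖ = 1 := by
    rw [hu, norm_smul, norm_inv, Real.norm_eq_abs, abs_of_pos hRpos, ← hRdef]
    field_simp
  have hk : k = R • u := by
    rw [hu, smul_smul, mul_inv_cancel₀ (ne_of_gt hRpos), one_smul]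
  set B : Set E3 := {n : E3 | |(inner ℝ u n : ℝ)| ≤ lam} with hBdef
  have hBmeas : MeasurableSet B := by
    have : Continuous fun n : E3 => |(inner ℝ u n : ℝ)| :=
      (continuous_const.inner continuous_id).abs
    exact (isClosed_le this continuous_const).measurableSet
  have hpt : ∀ n : E3, ENNReal.ofReal (_root_.sinc ((inner ℝ k n : ℝ)) ^ 2)
      ≤ B.indicator (fun _ => 1) n + ENNReal.ofReal (1 / R) := by
    intro n
    by_cases hn : n ∈ B
    · calc ENNReal.ofReal (_root_.sinc ((inner ℝ k n : ℝ)) ^ 2) ≤ ENNReal.ofReal 1 :=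
           ENNReal.ofReal_le_ofReal (sinc_sq_le_one _)
        _ = 1 := ENNReal.ofReal_one
        _ = B.indicator (fun _ => 1) n := by rw [Set.indicator_of_mem hn]
        _ ≤ _ := le_self_add
    · have habs : lam < |(inner ℝ u n : ℝ)| := by
        rw [hBdef] at hn; simpa using hn
      have hlampos : 0 < lam := by positivity
      have hinner : (inner ℝ k n : ℝ) = R * (inner ℝ u n : ℝ) := by
        rw [hk, real_inner_smul_left]
      have hne : (inner ℝ k n : ℝ) ≠ 0 := by
        rw [hinner]
        apply mul_ne_zero (ne_of_gt hRpos)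
        intro h; rw [h] at habs; simp at habs; linarith
      have hsq : R ≤ (inner ℝ k n : ℝ) ^ 2 := by
        rw [hinner, mul_pow]
        have h2 : lam ^ 2 ≤ (inner ℝ u n : ℝ) ^ 2 := by
          nlinarith [sq_abs (inner ℝ u n : ℝ), abs_nonneg (inner ℝ u n : ℝ)]
        have hlamsq : lam ^ 2 = 1 / R := by
          rw [hlam, div_pow, one_pow, Real.sq_sqrt hRpos.le]
        have h3 : R ^ 2 * (1/R) ≤ R ^ 2 * (inner ℝ u n : ℝ) ^ 2 := by
          rw [← hlamsq]; exact mul_le_mul_of_nonneg_left h2 (by positivity)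
        have h4 : R ^ 2 * (1/R) = R := by field_simp
        linarith
      calc ENNReal.ofReal (_root_.sinc ((inner ℝ k n : ℝ)) ^ 2)
          ≤ ENNReal.ofReal (1 / R) := by
            apply ENNReal.ofReal_le_ofReal
            refine (sinc_sq_le_inv _ hne).trans ?_
            apply div_le_div_of_nonneg_left (by norm_num) hRpos hsq
        _ ≤ _ := by
            rw [Set.indicator_of_notMem hn, zero_add]
  calc ∫⁻ n, ENNReal.ofReal (_root_.sinc ((inner ℝ k n : ℝ)) ^ 2) ∂sphereμ
      ≤ ∫⁻ n, (B.indicator (fun _ => 1) n + ENNReal.ofReal (1 / R)) ∂sphereμ :=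
        lintegral_mono hpt
    _ = sphereμ B + ENNReal.ofReal (1 / R) * sphereμ univ := by
        rw [lintegral_add_right _ measurable_const, lintegral_indicator hBmeas]
        simp [lintegral_const]
    _ ≤ ENNReal.ofReal (400 * lam) + ENNReal.ofReal (1 / R) * ENNReal.ofReal 720 := by
        gcongr
        · -- sphereμ B ≤ band bound
          rw [sphereμ, Measure.restrict_apply hBmeas]
          refine le_trans (measure_mono ?_) (band_bound u hun lam hlam0 hlam1)
          intro n ⟨h1, h2⟩; exact ⟨h2, h1⟩
        · rw [sphereμ, Measure.restrict_apply MeasurableSet.univ, Set.univ_inter]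
          exact sphere_bound
    _ ≤ ENNReal.ofReal (1600 / Real.sqrt R) := by
        rw [← ENNReal.ofReal_mul (by positivity), ← ENNReal.ofReal_add (by positivity)
          (by positivity)]
        apply ENNReal.ofReal_le_ofReal
        have hRR : Real.sqrt R ≤ R := by
          nlinarith [Real.sq_sqrt hRpos.le]
        have e1 : 400 * lam = 400 / Real.sqrt R := by rw [hlam]; ring
        have e2 : 1 / R * 720 ≤ 720 / Real.sqrt R := by
          rw [show (1:ℝ) / R * 720 = 720 / R by ring]
          exact div_le_div_of_nonneg_left (by norm_num) hsRpos hRR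
        rw [e1]
        have : (400:ℝ) / Real.sqrt R + 720 / Real.sqrt R ≤ 1600 / Real.sqrt R := by
          rw [← add_div, div_le_div_iff₀ hsRpos hsRpos]
          nlinarith
        calc (400:ℝ) / Real.sqrt R + 1 / R * 720 ≤ 400 / Real.sqrt R + 720 / Real.sqrt R := by
              linarith
          _ ≤ 1600 / Real.sqrt R := this

end Aux

theorem stmt8 (C : ℝ) (hC : 0 < C) :
    ∀ ε : ℝ, 0 < ε → ∃ R₀ : ℝ, 0 < R₀ ∧
      ∀ a : (Fin 3 → ℤ) → ℂ, Summable (fun k => ‖a k‖ ^ 2) →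
        (∑' k : Fin 3 → ℤ, ‖a k‖ ^ 2) ≤ C →
      ∀ R : ℝ, R₀ ≤ R →
        (∫ n, (∑' k : Fin 3 → ℤ,
            if R < ‖latticeVec k‖ then
              ‖a k‖ ^ 2 * _root_.sinc ((inner ℝ (latticeVec k) n : ℝ)) ^ 2
            else 0) ∂sphereμ) < ε := by
  intro ε hε
  refine ⟨max 9 ((3200 * C / ε) ^ 2), lt_of_lt_of_le (by norm_num) (le_max_left _ _), ?_⟩
  intro a hsum hsumC R hR
  have hR9 : 9 ≤ R := le_trans (le_max_left _ _) hR
  have hRsq : (3200 * C / ε) ^ 2 ≤ R := le_trans (le_max_right _ _) hR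
  have hRpos : (0:ℝ) < R := by linarith
  have hsR : 0 < Real.sqrt R := Real.sqrt_pos.mpr hRpos
  -- key numeric fact
  have hkey : 1600 * C / Real.sqrt R ≤ ε / 2 := by
    have h1 : 3200 * C / ε ≤ Real.sqrt R := by
      have := Real.sqrt_le_sqrt hRsq
      rwa [Real.sqrt_sq (by positivity)] at this
    rw [div_le_div_iff₀ hsR (by norm_num : (0:ℝ) < 2)]
    have h2 : 3200 * C ≤ Real.sqrt R * ε := by
      rw [div_le_iff₀ hε] at h1; linarith
    linarith
  set term : (Fin 3 → ℤ) → E3 → ℝ := fun k n =>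
    if R < ‖latticeVec k‖ then ‖a k‖ ^ 2 * _root_.sinc ((inner ℝ (latticeVec k) n : ℝ)) ^ 2 else 0
    with hterm
  have hnn : ∀ k n, 0 ≤ term k n := by
    intro k n
    rw [hterm]
    dsimp only
    split
    · positivity
    · exact le_refl 0
  have hle : ∀ k n, term k n ≤ ‖a k‖ ^ 2 := by
    intro k n
    rw [hterm]; dsimp only
    split
    · calc ‖a k‖ ^ 2 * _root_.sinc ((inner ℝ (latticeVec k) n : ℝ)) ^ 2 ≤ ‖a k‖ ^ 2 * 1 :=
          mul_le_mul_of_nonneg_left (sinc_sq_le_one _) (by positivity)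
        _ = ‖a k‖ ^ 2 := mul_one _
    · positivity
  have hsummable : ∀ n, Summable fun k => term k n :=
    fun n => hsum.of_nonneg_of_le (fun k => hnn k n) (fun k => hle k n)
  have hcont : ∀ k, Continuous (term k) := by
    intro k
    rw [hterm]; dsimp only
    split
    · exact continuous_const.mul
        ((_root_.continuous_sinc.comp (continuous_const.inner continuous_id)).pow 2)
    · exact continuous_const
  set g : E3 → ℝ := fun n => ∑' k, term k n with hg
  set G : E3 → ENNReal := fun n => ∑' k, ENNReal.ofReal (term k n) with hG
  have hofReal : ∀ n, ENNReal.ofReal (g n) = G n := by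
    intro n
    exact ENNReal.ofReal_tsum_of_nonneg (fun k => hnn k n) (hsummable n)
  have hGmeas : Measurable G := by
    apply Measurable.ennreal_tsum
    intro k
    exact ((hcont k).measurable).ennreal_ofReal
  have hgnn : ∀ n, 0 ≤ g n := fun n => tsum_nonneg (fun k => hnn k n)
  have hgm : AEStronglyMeasurable g sphereμ := by
    have : g = fun n => (G n).toReal := by
      funext n
      rw [← hofReal n, ENNReal.toReal_ofReal (hgnn n)]
    rw [this]
    exact hGmeas.ennreal_toReal.aestronglyMeasurable
  have hint : ∫ n, g n ∂sphereμ = (∫⁻ n, ENNReal.ofReal (g n) ∂sphereμ).toReal :=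
    integral_eq_lintegral_of_nonneg_ae (ae_of_all _ hgnn) hgm
  have hlin : ∫⁻ n, ENNReal.ofReal (g n) ∂sphereμ ≤ ENNReal.ofReal (ε / 2) := by
    have e1 : ∫⁻ n, ENNReal.ofReal (g n) ∂sphereμ = ∑' k, ∫⁻ n, ENNReal.ofReal (term k n) ∂sphereμ := by
      rw [lintegral_congr hofReal]
      exact lintegral_tsum fun k => ((hcont k).measurable.ennreal_ofReal).aemeasurable
    rw [e1]
    have hbound : ∀ k, ∫⁻ n, ENNReal.ofReal (term k n) ∂sphereμ
        ≤ ENNReal.ofReal (‖a k‖ ^ 2) * ENNReal.ofReal (1600 / Real.sqrt R) := by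
      intro k
      by_cases hk : R < ‖latticeVec k‖
      · have hterm_eq : ∀ n, term k n = ‖a k‖ ^ 2 * _root_.sinc ((inner ℝ (latticeVec k) n : ℝ)) ^ 2 := by
          intro n; rw [hterm]; dsimp only; rw [if_pos hk]
        have h9 : 9 ≤ ‖latticeVec k‖ := by linarith
        calc ∫⁻ n, ENNReal.ofReal (term k n) ∂sphereμ
            = ∫⁻ n, ENNReal.ofReal (‖a k‖ ^ 2) *
                ENNReal.ofReal (_root_.sinc ((inner ℝ (latticeVec k) n : ℝ)) ^ 2) ∂sphereμ := by
              apply lintegral_congr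
              intro n
              rw [hterm_eq n, ENNReal.ofReal_mul (by positivity)]
          _ = ENNReal.ofReal (‖a k‖ ^ 2) *
              ∫⁻ n, ENNReal.ofReal (_root_.sinc ((inner ℝ (latticeVec k) n : ℝ)) ^ 2) ∂sphereμ := by
              rw [lintegral_const_mul]
              exact ((_root_.continuous_sinc.comp
                (continuous_const.inner continuous_id)).pow 2).measurable.ennreal_ofReal
          _ ≤ ENNReal.ofReal (‖a k‖ ^ 2) * ENNReal.ofReal (1600 / Real.sqrt ‖latticeVec k‖) :=
              mul_le_mul_right (sinc_integral_bound _ h9) _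
          _ ≤ ENNReal.ofReal (‖a k‖ ^ 2) * ENNReal.ofReal (1600 / Real.sqrt R) := by
              apply mul_le_mul_right
              apply ENNReal.ofReal_le_ofReal
              apply div_le_div_of_nonneg_left (by norm_num) hsR
              exact Real.sqrt_le_sqrt (by linarith)
      · have : ∀ n, term k n = 0 := by
          intro n; rw [hterm]; dsimp only; rw [if_neg hk]
        simp only [this, ENNReal.ofReal_zero, lintegral_zero]
        exact zero_le
    calc ∑' k, ∫⁻ n, ENNReal.ofReal (term k n) ∂sphereμ
        ≤ ∑' k, ENNReal.ofReal (‖a k‖ ^ 2) * ENNReal.ofReal (1600 / Real.sqrt R) :=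
          ENNReal.tsum_le_tsum hbound
      _ = (∑' k, ENNReal.ofReal (‖a k‖ ^ 2)) * ENNReal.ofReal (1600 / Real.sqrt R) :=
          ENNReal.tsum_mul_right
      _ ≤ ENNReal.ofReal C * ENNReal.ofReal (1600 / Real.sqrt R) := by
          apply mul_le_mul_left
          rw [← ENNReal.ofReal_tsum_of_nonneg (fun k => by positivity) hsum]
          exact ENNReal.ofReal_le_ofReal hsumC
      _ = ENNReal.ofReal (C * (1600 / Real.sqrt R)) := by
          rw [← ENNReal.ofReal_mul hC.le]
      _ ≤ ENNReal.ofReal (ε / 2) := by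
          apply ENNReal.ofReal_le_ofReal
          calc C * (1600 / Real.sqrt R) = 1600 * C / Real.sqrt R := by ring
            _ ≤ ε / 2 := hkey
  show (∫ n, g n ∂sphereμ) < ε
  calc ∫ n, g n ∂sphereμ = (∫⁻ n, ENNReal.ofReal (g n) ∂sphereμ).toReal := hint
    _ ≤ (ENNReal.ofReal (ε / 2)).toReal := ENNReal.toReal_mono ENNReal.ofReal_ne_top hlin
    _ = ε / 2 := ENNReal.toReal_ofReal (by linarith)
    _ < ε := by linarith
end
end

section
/- Let Ω ⊂ ℝ³ be a bounded measurable set. Then there exists a constant C > 0, depending only on Ω, such that for all x, h ∈ ℝ³ with |h| ≤ 1: ∫_Ω | |x−η|^{−2} − |x+h−η|^{−2} | dη ≤ C |h|^{1/2}. -/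
open MeasureTheory Real
open ENNReal Metric

noncomputable section

lemma rpow_one_add' {y : ℝ} (hy : 0 < y) : y * y ^ ((3:ℝ)/2) = y ^ ((5:ℝ)/2) := by
  have h := Real.rpow_add hy 1 ((3:ℝ)/2)
  rw [Real.rpow_one] at h
  rw [← h]; norm_num

lemma cross_ineq {x y : ℝ} (hx : 0 < x) (hy : 0 < y) :
    x * y ^ ((3:ℝ)/2) ≤ x ^ ((5:ℝ)/2) + y ^ ((5:ℝ)/2) := by
  rcases le_total x y with hxy | hxy
  · calc x * y ^ ((3:ℝ)/2) ≤ y * y ^ ((3:ℝ)/2) :=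
        mul_le_mul_of_nonneg_right hxy (Real.rpow_nonneg hy.le _)
    _ = y ^ ((5:ℝ)/2) := rpow_one_add' hy
    _ ≤ _ := le_add_of_nonneg_left (Real.rpow_nonneg hx.le _)
  · calc x * y ^ ((3:ℝ)/2) ≤ x * x ^ ((3:ℝ)/2) :=
        mul_le_mul_of_nonneg_left (Real.rpow_le_rpow hy.le hxy (by norm_num)) hx.le
    _ = x ^ ((5:ℝ)/2) := rpow_one_add' hx
    _ ≤ _ := le_add_of_nonneg_right (Real.rpow_nonneg hy.le _)

lemma ptwise (a b t : ℝ) (ha : 0 < a) (hb : 0 < b) (ht : |a - b| ≤ t) :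
    |(a^2)⁻¹ - (b^2)⁻¹| ≤ 3 * Real.sqrt 2 * Real.sqrt t *
      ((a⁻¹) ^ ((5:ℝ)/2) + (b⁻¹) ^ ((5:ℝ)/2)) := by
  set x := a⁻¹ with hxdef
  set y := b⁻¹ with hydef
  have hx : 0 < x := inv_pos.mpr ha
  have hy : 0 < y := inv_pos.mpr hb
  have ht0 : 0 ≤ t := le_trans (abs_nonneg _) ht
  have hax : a * x = 1 := mul_inv_cancel₀ ha.ne'
  have hby : b * y = 1 := mul_inv_cancel₀ hb.ne'
  have h1 : |(a^2)⁻¹ - (b^2)⁻¹| ≤ x^2 + y^2 := by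
    calc |(a^2)⁻¹ - (b^2)⁻¹| ≤ |(a^2)⁻¹| + |(b^2)⁻¹| := abs_sub _ _
    _ = (a^2)⁻¹ + (b^2)⁻¹ := by
        rw [abs_of_nonneg (by positivity), abs_of_nonneg (by positivity)]
    _ = x^2 + y^2 := by rw [hxdef, hydef, inv_pow, inv_pow]
  have h2 : |(a^2)⁻¹ - (b^2)⁻¹| ≤ 2 * t * (x^3 + y^3) := by
    have key : (a^2)⁻¹ - (b^2)⁻¹ = (b - a) * ((b + a) * (x^2 * y^2)) := by
      rw [hxdef, hydef]
      field_simp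
      ring
    rw [key, abs_mul]
    have habs : |(b + a) * (x^2 * y^2)| = (b + a) * (x^2 * y^2) := by
      rw [abs_of_nonneg]; positivity
    rw [habs]
    have hba : |b - a| ≤ t := by rwa [abs_sub_comm]
    have hexp : (b + a) * (x^2 * y^2) = x^2 * y * (b * y) + x * y^2 * (a * x) := by ring
    have hexp2 : (b + a) * (x^2 * y^2) = x^2 * y + x * y^2 := by
      rw [hexp, hax, hby]; ring
    have hc1 : x^2 * y ≤ x^3 + y^3 := by nlinarith [sq_nonneg (x - y), sq_nonneg (x + y), mul_pos hx hy]
    have hc2 : x * y^2 ≤ x^3 + y^3 := by nlinarith [sq_nonneg (x - y), sq_nonneg (x + y), mul_pos hx hy]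
    calc |b - a| * ((b + a) * (x^2 * y^2)) ≤ t * ((b + a) * (x^2 * y^2)) := by
          apply mul_le_mul_of_nonneg_right hba; positivity
    _ = t * (x^2 * y + x * y^2) := by rw [hexp2]
    _ ≤ t * ((x^3 + y^3) + (x^3 + y^3)) := by
          apply mul_le_mul_of_nonneg_left _ ht0; linarith
    _ = 2 * t * (x^3 + y^3) := by ring
  -- |d| ≤ sqrt((x²+y²) * (2t(x³+y³)))
  have h3 : |(a^2)⁻¹ - (b^2)⁻¹| ≤ Real.sqrt ((x^2 + y^2) * (2 * t * (x^3 + y^3))) := by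
    have hd0 : 0 ≤ |(a^2)⁻¹ - (b^2)⁻¹| := abs_nonneg _
    have : |(a^2)⁻¹ - (b^2)⁻¹| * |(a^2)⁻¹ - (b^2)⁻¹| ≤ (x^2 + y^2) * (2 * t * (x^3 + y^3)) :=
      mul_le_mul h1 h2 hd0 (by positivity)
    calc |(a^2)⁻¹ - (b^2)⁻¹| = Real.sqrt (|(a^2)⁻¹ - (b^2)⁻¹| * |(a^2)⁻¹ - (b^2)⁻¹|) :=
          (Real.sqrt_mul_self hd0).symm
    _ ≤ _ := Real.sqrt_le_sqrt this
  have h5 : Real.sqrt (x^2 + y^2) ≤ x + y := by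
    rw [show x + y = Real.sqrt ((x+y)^2) by rw [Real.sqrt_sq (by positivity)]]
    exact Real.sqrt_le_sqrt (by nlinarith [mul_pos hx hy])
  have h6 : Real.sqrt (x^3 + y^3) ≤ x ^ ((3:ℝ)/2) + y ^ ((3:ℝ)/2) := by
    rw [show x ^ ((3:ℝ)/2) + y ^ ((3:ℝ)/2) = Real.sqrt ((x ^ ((3:ℝ)/2) + y ^ ((3:ℝ)/2))^2) by
      rw [Real.sqrt_sq (by positivity)]]
    apply Real.sqrt_le_sqrt
    have e1 : (x ^ ((3:ℝ)/2))^2 = x^3 := by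
      rw [← Real.rpow_natCast (x ^ ((3:ℝ)/2)) 2, ← Real.rpow_mul hx.le, ← Real.rpow_natCast x 3]
      norm_num
    have e2 : (y ^ ((3:ℝ)/2))^2 = y^3 := by
      rw [← Real.rpow_natCast (y ^ ((3:ℝ)/2)) 2, ← Real.rpow_mul hy.le, ← Real.rpow_natCast y 3]
      norm_num
    nlinarith [mul_nonneg (Real.rpow_nonneg hx.le ((3:ℝ)/2)) (Real.rpow_nonneg hy.le ((3:ℝ)/2))]
  have h7 : (x + y) * (x ^ ((3:ℝ)/2) + y ^ ((3:ℝ)/2)) ≤ 3 * (x ^ ((5:ℝ)/2) + y ^ ((5:ℝ)/2)) := by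
    have e : (x + y) * (x ^ ((3:ℝ)/2) + y ^ ((3:ℝ)/2))
        = x * x ^ ((3:ℝ)/2) + x * y ^ ((3:ℝ)/2) + y * x ^ ((3:ℝ)/2) + y * y ^ ((3:ℝ)/2) := by ring
    rw [e, rpow_one_add' hx, rpow_one_add' hy]
    have := cross_ineq hx hy
    have := cross_ineq hy hx
    linarith
  -- assemble
  have hsq : Real.sqrt ((x^2 + y^2) * (2 * t * (x^3 + y^3)))
      = Real.sqrt 2 * Real.sqrt t * (Real.sqrt (x^2 + y^2) * Real.sqrt (x^3 + y^3)) := by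
    rw [show (x^2 + y^2) * (2 * t * (x^3 + y^3)) = 2 * (t * ((x^2+y^2) * (x^3+y^3))) by ring,
      Real.sqrt_mul (by norm_num), Real.sqrt_mul ht0, Real.sqrt_mul (by positivity)]
    ring
  calc |(a^2)⁻¹ - (b^2)⁻¹| ≤ Real.sqrt ((x^2 + y^2) * (2 * t * (x^3 + y^3))) := h3
  _ = Real.sqrt 2 * Real.sqrt t * (Real.sqrt (x^2 + y^2) * Real.sqrt (x^3 + y^3)) := hsq
  _ ≤ Real.sqrt 2 * Real.sqrt t * ((x + y) * (x ^ ((3:ℝ)/2) + y ^ ((3:ℝ)/2))) := by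
      apply mul_le_mul_of_nonneg_left _ (by positivity)
      exact mul_le_mul h5 h6 (Real.sqrt_nonneg _) (by positivity)
  _ ≤ Real.sqrt 2 * Real.sqrt t * (3 * (x ^ ((5:ℝ)/2) + y ^ ((5:ℝ)/2))) :=
      mul_le_mul_of_nonneg_left h7 (by positivity)
  _ = 3 * Real.sqrt 2 * Real.sqrt t * (x ^ ((5:ℝ)/2) + y ^ ((5:ℝ)/2)) := by ring


lemma geom_ident (n : ℕ) : ((2:ℝ)^(n+1)) ^ ((5:ℝ)/2) * (((2:ℝ)⁻¹^n))^3
    = (2:ℝ) ^ ((5:ℝ)/2) * ((2:ℝ) ^ (-(1:ℝ)/2)) ^ n := by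
  have h2 : (0:ℝ) ≤ 2 := by norm_num
  have l1 : ((2:ℝ)^(n+1)) ^ ((5:ℝ)/2) = (2:ℝ) ^ (((n:ℝ)+1) * ((5:ℝ)/2)) := by
    rw [← Real.rpow_natCast (2:ℝ) (n+1), ← Real.rpow_mul h2]
    congr 1; push_cast; ring
  have l2 : (((2:ℝ)⁻¹^n))^3 = (2:ℝ) ^ (-(3*(n:ℝ))) := by
    rw [← pow_mul, inv_pow, ← Real.rpow_natCast (2:ℝ) (n*3), ← Real.rpow_neg h2]
    congr 1; push_cast; ring
  have l3 : ((2:ℝ) ^ (-(1:ℝ)/2)) ^ n = (2:ℝ) ^ ((-(1:ℝ)/2) * (n:ℝ)) := by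
    rw [← Real.rpow_natCast ((2:ℝ) ^ (-(1:ℝ)/2)) n, ← Real.rpow_mul h2]
  rw [l1, l2, l3, ← Real.rpow_add (by norm_num : (0:ℝ) < 2),
    ← Real.rpow_add (by norm_num : (0:ℝ) < 2)]
  congr 1; ring

lemma finrank_E3 : Module.finrank ℝ E3 = 3 := by
  simp [finrank_euclideanSpace]

lemma unif_bound (Ω : Set E3) (hΩm : MeasurableSet Ω) (hΩb : Bornology.IsBounded Ω) :
    ∃ K : ℝ≥0∞, K ≠ ⊤ ∧ ∀ c : E3,
      (∫⁻ η in Ω, ENNReal.ofReal ((‖c - η‖⁻¹) ^ ((5:ℝ)/2))) ≤ K := by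
  set V1 : ℝ≥0∞ := volume (ball (0:E3) 1) with hV1
  set q : ℝ≥0∞ := ENNReal.ofReal ((2:ℝ) ^ (-(1:ℝ)/2)) with hq
  have hqlt : q < 1 := by
    rw [hq]
    refine ENNReal.ofReal_lt_one.mpr ?_
    exact Real.rpow_lt_one_of_one_lt_of_neg one_lt_two (by norm_num)
  set S : ℝ≥0∞ := ENNReal.ofReal ((2:ℝ) ^ ((5:ℝ)/2)) * ((1 - q)⁻¹ * V1) with hS
  refine ⟨volume Ω + S, ?_, ?_⟩
  · have h1 : volume Ω ≠ ⊤ := hΩb.measure_lt_top.ne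
    have h2 : V1 ≠ ⊤ := (measure_ball_lt_top).ne
    have h3 : (1 - q)⁻¹ ≠ ⊤ := by
      rw [Ne, ENNReal.inv_eq_top, tsub_eq_zero_iff_le]
      exact fun hle => absurd (lt_of_lt_of_le hqlt hle) (lt_irrefl q)
    exact ENNReal.add_ne_top.mpr ⟨h1, mul_ne_top ofReal_ne_top (mul_ne_top h3 h2)⟩
  intro c
  set f : E3 → ℝ≥0∞ := fun η => ENNReal.ofReal ((‖c - η‖⁻¹) ^ ((5:ℝ)/2)) with hf
  set A : ℕ → Set E3 := fun n => closedBall c ((2:ℝ)⁻¹^n) \ ball c ((2:ℝ)⁻¹^(n+1)) with hA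
  -- covering
  have cover : Ω ⊆ (Ω \ ball c 1) ∪ ({c} ∪ ⋃ n, A n) := by
    intro η hη
    by_cases hball : η ∈ ball c 1
    · right
      by_cases hc : η = c
      · left; exact hc
      · right
        have hr0 : 0 < dist η c := dist_pos.mpr hc
        have hr1 : dist η c < 1 := mem_ball.mp hball
        have hex : ∃ m : ℕ, (2:ℝ)⁻¹ ^ m < dist η c :=
          exists_pow_lt_of_lt_one hr0 (by norm_num)
        classical
        set N := Nat.find hex with hN
        have hNlt : (2:ℝ)⁻¹ ^ N < dist η c := Nat.find_spec hex
        have hN0 : N ≠ 0 := by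
          intro h0
          rw [h0, pow_zero] at hNlt
          linarith
        obtain ⟨n, hn⟩ := Nat.exists_eq_succ_of_ne_zero hN0
        rw [Nat.succ_eq_add_one] at hn
        have hmin : ¬ ((2:ℝ)⁻¹ ^ n < dist η c) := Nat.find_min hex (by omega)
        push_neg at hmin
        refine Set.mem_iUnion.mpr ⟨n, ?_, ?_⟩
        · exact mem_closedBall.mpr hmin
        · intro hmem
          have h1 := mem_ball.mp hmem
          rw [hn] at hNlt
          linarith
    · left; exact ⟨hη, hball⟩
  calc (∫⁻ η in Ω, f η) ≤ ∫⁻ η in (Ω \ ball c 1) ∪ ({c} ∪ ⋃ n, A n), f η :=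
        lintegral_mono_set cover
  _ ≤ (∫⁻ η in Ω \ ball c 1, f η) + ∫⁻ η in {c} ∪ ⋃ n, A n, f η := lintegral_union_le _ _ _
  _ ≤ (∫⁻ η in Ω \ ball c 1, f η) + ((∫⁻ η in ({c} : Set E3), f η) + ∫⁻ η in ⋃ n, A n, f η) :=
        add_le_add_right (lintegral_union_le _ _ _) _
  _ ≤ volume Ω + (0 + S) := by
      gcongr
      · -- far piece
        have hfar : ∀ η ∈ Ω \ ball c 1, f η ≤ 1 := by
          intro η hη
          have hdist : (1:ℝ) ≤ dist η c := by
            have := hη.2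
            rw [mem_ball] at this
            linarith [not_lt.mp this]
          have hnorm : (1:ℝ) ≤ ‖c - η‖ := by
            rw [show ‖c - η‖ = dist η c from by rw [dist_comm, dist_eq_norm]]
            exact hdist
          have hinv : ‖c - η‖⁻¹ ≤ 1 := inv_le_one_of_one_le₀ hnorm
          have hrp : (‖c - η‖⁻¹) ^ ((5:ℝ)/2) ≤ 1 :=
            Real.rpow_le_one (inv_nonneg.mpr (norm_nonneg _)) hinv (by norm_num)
          calc f η ≤ ENNReal.ofReal 1 := ENNReal.ofReal_le_ofReal hrp
          _ = 1 := ENNReal.ofReal_one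
        calc (∫⁻ η in Ω \ ball c 1, f η) ≤ ∫⁻ _ in Ω \ ball c 1, 1 :=
              setLIntegral_mono' (hΩm.diff measurableSet_ball) hfar
        _ = volume (Ω \ ball c 1) := setLIntegral_one _
        _ ≤ volume Ω := measure_mono Set.diff_subset
      · -- singleton
        have : volume ({c} : Set E3) = 0 := measure_singleton c
        rw [setLIntegral_measure_zero _ _ this]
      · -- annuli
        calc (∫⁻ η in ⋃ n, A n, f η) ≤ ∑' n, ∫⁻ η in A n, f η := lintegral_iUnion_le _ _
        _ ≤ ∑' n, (ENNReal.ofReal ((2:ℝ) ^ ((5:ℝ)/2)) * q ^ n) * V1 := by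
            refine ENNReal.tsum_le_tsum fun n => ?_
            have hbnd : ∀ η ∈ A n, f η ≤ ENNReal.ofReal (((2:ℝ)^(n+1)) ^ ((5:ℝ)/2)) := by
              intro η hη
              have hlow : (2:ℝ)⁻¹^(n+1) ≤ dist η c := by
                have := hη.2
                rw [mem_ball] at this
                linarith [not_lt.mp this]
              have hpos : (0:ℝ) < (2:ℝ)⁻¹^(n+1) := by positivity
              have hnorm : (2:ℝ)⁻¹^(n+1) ≤ ‖c - η‖ := by
                rw [show ‖c - η‖ = dist η c from by rw [dist_comm, dist_eq_norm]]
                exact hlow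
              have hinv : ‖c - η‖⁻¹ ≤ ((2:ℝ)⁻¹^(n+1))⁻¹ :=
                inv_anti₀ hpos hnorm
              have hiv : ((2:ℝ)⁻¹^(n+1))⁻¹ = (2:ℝ)^(n+1) := by
                rw [inv_pow, inv_inv]
              rw [hiv] at hinv
              exact ENNReal.ofReal_le_ofReal
                (Real.rpow_le_rpow (inv_nonneg.mpr (norm_nonneg _)) hinv (by norm_num))
            have hAmeas : MeasurableSet (A n) :=
              measurableSet_closedBall.diff measurableSet_ball
            calc (∫⁻ η in A n, f η)
                ≤ ∫⁻ _ in A n, ENNReal.ofReal (((2:ℝ)^(n+1)) ^ ((5:ℝ)/2)) :=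
                  setLIntegral_mono' hAmeas hbnd
            _ = ENNReal.ofReal (((2:ℝ)^(n+1)) ^ ((5:ℝ)/2)) * volume (A n) :=
                  setLIntegral_const _ _
            _ ≤ ENNReal.ofReal (((2:ℝ)^(n+1)) ^ ((5:ℝ)/2)) *
                  (ENNReal.ofReal (((2:ℝ)⁻¹^n)^3) * V1) := by
                  gcongr
                  calc volume (A n) ≤ volume (closedBall c ((2:ℝ)⁻¹^n)) :=
                        measure_mono Set.diff_subset
                  _ = ENNReal.ofReal (((2:ℝ)⁻¹^n) ^ Module.finrank ℝ E3) * V1 :=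
                        Measure.addHaar_closedBall _ _ (by positivity)
                  _ = ENNReal.ofReal (((2:ℝ)⁻¹^n)^3) * V1 := by rw [finrank_E3]
            _ = (ENNReal.ofReal ((2:ℝ) ^ ((5:ℝ)/2)) * q ^ n) * V1 := by
                  rw [← mul_assoc, ← ENNReal.ofReal_mul (by positivity), geom_ident,
                    ENNReal.ofReal_mul (by positivity), hq, ← ENNReal.ofReal_pow (by positivity)]
        _ = S := by
            rw [ENNReal.tsum_mul_right, ENNReal.tsum_mul_left, ENNReal.tsum_geometric, hS,
              mul_assoc]
  _ = volume Ω + S := by rw [zero_add]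


theorem stmt11 (Ω : Set E3) (hΩm : MeasurableSet Ω) (hΩb : Bornology.IsBounded Ω) :
    ∃ C : ℝ, 0 < C ∧ ∀ x h : E3, ‖h‖ ≤ 1 →
      (∫ η in Ω, |(‖x - η‖ ^ 2)⁻¹ - (‖x + h - η‖ ^ 2)⁻¹|)
        ≤ C * Real.sqrt ‖h‖ := by
  obtain ⟨K, hKfin, hK⟩ := unif_bound Ω hΩm hΩb
  refine ⟨6 * Real.sqrt 2 * (K.toReal + 1), by positivity, ?_⟩
  intro x h _
  have hmeas : Measurable fun η : E3 => |(‖x - η‖ ^ 2)⁻¹ - (‖x + h - η‖ ^ 2)⁻¹| := by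
    apply Measurable.abs
    exact (((measurable_const.sub measurable_id).norm.pow_const 2).inv).sub
      (((measurable_const.sub measurable_id).norm.pow_const 2).inv)
  rw [integral_eq_lintegral_of_nonneg_ae (ae_of_all _ fun η => abs_nonneg _)
    hmeas.aestronglyMeasurable.restrict]
  apply ENNReal.toReal_le_of_le_ofReal (by positivity)
  set t := ‖h‖ with htdef
  have hnull : volume ({x, x + h} : Set E3) = 0 :=
    ((Set.finite_singleton _).insert _).measure_zero volume
  have h0 : ∀ᵐ η ∂(volume : Measure E3), η ∉ ({x, x + h} : Set E3) :=
    measure_eq_zero_iff_ae_notMem.mp hnull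
  have h0' : ∀ᵐ η ∂(volume.restrict Ω), η ∉ ({x, x + h} : Set E3) :=
    ae_restrict_of_ae h0
  have hae : ∀ᵐ η ∂(volume.restrict Ω),
      ENNReal.ofReal |(‖x - η‖ ^ 2)⁻¹ - (‖x + h - η‖ ^ 2)⁻¹|
      ≤ ENNReal.ofReal (3 * Real.sqrt 2 * Real.sqrt t) *
        (ENNReal.ofReal ((‖x - η‖⁻¹) ^ ((5:ℝ)/2)) +
         ENNReal.ofReal ((‖x + h - η‖⁻¹) ^ ((5:ℝ)/2))) := by
    refine h0'.mono fun η hη => ?_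
    have hη1 : η ≠ x := fun he => hη (by simp [he])
    have hη2 : η ≠ x + h := fun he => hη (by simp [he])
    have ha : 0 < ‖x - η‖ := by
      rw [norm_pos_iff]; exact sub_ne_zero.mpr (Ne.symm hη1)
    have hb : 0 < ‖x + h - η‖ := by
      rw [norm_pos_iff]; exact sub_ne_zero.mpr (Ne.symm hη2)
    have hab : |‖x - η‖ - ‖x + h - η‖| ≤ t := by
      have h1 := abs_norm_sub_norm_le (x - η) (x + h - η)
      have h2 : (x - η) - (x + h - η) = -h := by abel
      rw [h2, norm_neg] at h1
      exact h1
    have hpt := ptwise _ _ _ ha hb hab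
    calc ENNReal.ofReal |(‖x - η‖ ^ 2)⁻¹ - (‖x + h - η‖ ^ 2)⁻¹|
        ≤ ENNReal.ofReal (3 * Real.sqrt 2 * Real.sqrt t *
            ((‖x - η‖⁻¹) ^ ((5:ℝ)/2) + (‖x + h - η‖⁻¹) ^ ((5:ℝ)/2))) :=
          ENNReal.ofReal_le_ofReal hpt
    _ = _ := by
        rw [ENNReal.ofReal_mul (by positivity),
          ENNReal.ofReal_add (by positivity) (by positivity)]
  have hg1 : Measurable fun η : E3 => ENNReal.ofReal ((‖x - η‖⁻¹) ^ ((5:ℝ)/2)) := by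
    apply ENNReal.measurable_ofReal.comp
    exact (Real.continuous_rpow_const (by norm_num)).measurable.comp
      ((measurable_const.sub measurable_id).norm.inv)
  calc (∫⁻ η in Ω, ENNReal.ofReal |(‖x - η‖ ^ 2)⁻¹ - (‖x + h - η‖ ^ 2)⁻¹|)
      ≤ ∫⁻ η in Ω, ENNReal.ofReal (3 * Real.sqrt 2 * Real.sqrt t) *
        (ENNReal.ofReal ((‖x - η‖⁻¹) ^ ((5:ℝ)/2)) +
         ENNReal.ofReal ((‖x + h - η‖⁻¹) ^ ((5:ℝ)/2))) := lintegral_mono_ae hae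
  _ = ENNReal.ofReal (3 * Real.sqrt 2 * Real.sqrt t) *
      ((∫⁻ η in Ω, ENNReal.ofReal ((‖x - η‖⁻¹) ^ ((5:ℝ)/2))) +
       ∫⁻ η in Ω, ENNReal.ofReal ((‖x + h - η‖⁻¹) ^ ((5:ℝ)/2))) := by
      rw [lintegral_const_mul' _ _ ENNReal.ofReal_ne_top, lintegral_add_left hg1]
  _ ≤ ENNReal.ofReal (3 * Real.sqrt 2 * Real.sqrt t) * (K + K) := by
      gcongr
      · exact hK x
      · exact hK (x + h)
  _ ≤ ENNReal.ofReal (6 * Real.sqrt 2 * (K.toReal + 1) * Real.sqrt t) := by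
      have hKK : K + K ≤ ENNReal.ofReal (2 * (K.toReal + 1)) := by
        have : K = ENNReal.ofReal K.toReal := (ENNReal.ofReal_toReal hKfin).symm
        calc K + K = ENNReal.ofReal K.toReal + ENNReal.ofReal K.toReal := by rw [← this]
        _ = ENNReal.ofReal (2 * K.toReal) := by
            rw [← ENNReal.ofReal_add ENNReal.toReal_nonneg ENNReal.toReal_nonneg]; ring_nf
        _ ≤ _ := ENNReal.ofReal_le_ofReal (by nlinarith [ENNReal.toReal_nonneg (a := K)])
      calc ENNReal.ofReal (3 * Real.sqrt 2 * Real.sqrt t) * (K + K)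
          ≤ ENNReal.ofReal (3 * Real.sqrt 2 * Real.sqrt t) *
            ENNReal.ofReal (2 * (K.toReal + 1)) := by gcongr
      _ = ENNReal.ofReal (3 * Real.sqrt 2 * Real.sqrt t * (2 * (K.toReal + 1))) :=
          (ENNReal.ofReal_mul (by positivity)).symm
      _ ≤ _ := ENNReal.ofReal_le_ofReal (le_of_eq (by ring))
end
end

section
/- Let φ : ℝ³ → ℝ be bounded and Lipschitz continuous. Then there exists a constant C > 0, depending only on sup|φ| and the Lipschitz constant of φ, such that for all z, x, h, η ∈ ℝ³ with η ≠ x and η ≠ x + h: | ∫_0^{|η−x|} φ(z − x − λ·(η−x)/|η−x|) dλ − ∫_0^{|η−x−h|} φ(z − x − h − λ·(η−x−h)/|η−x−h|) dλ | ≤ C |h| (1 + |η−x|). -/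
open MeasureTheory Real

noncomputable section

lemma unit_sub_unit_le (a b : E3) (ha : a ≠ 0) (hb : b ≠ 0) :
    ‖‖a‖⁻¹ • a - ‖b‖⁻¹ • b‖ ≤ 2 * ‖a - b‖ / ‖a‖ := by
  have hna : (0:ℝ) < ‖a‖ := norm_pos_iff.mpr ha
  have hnb : (0:ℝ) < ‖b‖ := norm_pos_iff.mpr hb
  rw [div_eq_inv_mul, ← mul_le_mul_iff_right₀ hna, ← mul_assoc,
    mul_inv_cancel₀ hna.ne', one_mul]
  have h1 : ‖a‖ • (‖a‖⁻¹ • a - ‖b‖⁻¹ • b) = a - (‖a‖ * ‖b‖⁻¹) • b := by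
    rw [smul_sub, smul_smul, smul_smul, mul_inv_cancel₀ hna.ne', one_smul]
  have h2 : ‖a‖ * ‖‖a‖⁻¹ • a - ‖b‖⁻¹ • b‖ = ‖a - (‖a‖ * ‖b‖⁻¹) • b‖ := by
    rw [← h1, norm_smul, Real.norm_eq_abs, abs_of_pos hna]
  rw [h2]
  have h3 : a - (‖a‖ * ‖b‖⁻¹) • b = (a - b) + (b - (‖a‖ * ‖b‖⁻¹) • b) := by abel
  have h4 : ‖b - (‖a‖ * ‖b‖⁻¹) • b‖ = |‖b‖ - ‖a‖| := by
    have : b - (‖a‖ * ‖b‖⁻¹) • b = (1 - ‖a‖ * ‖b‖⁻¹) • b := by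
      rw [sub_smul, one_smul]
    rw [this, norm_smul, Real.norm_eq_abs]
    rw [show (1 - ‖a‖ * ‖b‖⁻¹) = (‖b‖ - ‖a‖) * ‖b‖⁻¹ by field_simp]
    rw [abs_mul, abs_of_pos (inv_pos.mpr hnb), mul_assoc,
      inv_mul_cancel₀ hnb.ne', mul_one]
  calc ‖a - (‖a‖ * ‖b‖⁻¹) • b‖ ≤ ‖a - b‖ + ‖b - (‖a‖ * ‖b‖⁻¹) • b‖ := by
        rw [h3]; exact norm_add_le _ _
    _ ≤ ‖a - b‖ + ‖a - b‖ := by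
        rw [h4]
        have := abs_norm_sub_norm_le b a
        rw [norm_sub_rev b a] at this
        linarith
    _ = 2 * ‖a - b‖ := by ring

theorem stmt14 (Cb : ℝ) (Lip : NNReal) :
    ∃ C : ℝ, 0 < C ∧ ∀ φ : E3 → ℝ, (∀ y, |φ y| ≤ Cb) → LipschitzWith Lip φ →
      ∀ z x h η : E3, η ≠ x → η ≠ x + h →
        |(∫ t in (0:ℝ)..‖η - x‖, φ (z - x - t • (‖η - x‖⁻¹ • (η - x)))) -
            ∫ t in (0:ℝ)..‖η - x - h‖, φ (z - x - h - t • (‖η - x - h‖⁻¹ • (η - x - h)))|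
          ≤ C * ‖h‖ * (1 + ‖η - x‖) := by
  refine ⟨|Cb| + 3 * (Lip : ℝ) + 1, by positivity, ?_⟩
  intro φ hCb hLip z x h η hx hxh
  set a : E3 := η - x with ha_def
  set b : E3 := η - x - h with hb_def
  have ha : a ≠ 0 := sub_ne_zero.mpr hx
  have hb : b ≠ 0 := by
    rw [hb_def, sub_sub]
    exact sub_ne_zero.mpr hxh
  have hna : (0:ℝ) < ‖a‖ := norm_pos_iff.mpr ha
  have hab : a - b = h := sub_sub_cancel (η - x) h
  set u : E3 := ‖a‖⁻¹ • a with hu_def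
  set v : E3 := ‖b‖⁻¹ • b with hv_def
  set F : ℝ → ℝ := fun t => φ (z - x - t • u) with hF_def
  set G : ℝ → ℝ := fun t => φ (z - x - h - t • v) with hG_def
  have hFc : Continuous F := by
    apply hLip.continuous.comp
    fun_prop
  have hGc : Continuous G := by
    apply hLip.continuous.comp
    fun_prop
  have hCb0 : 0 ≤ Cb := le_trans (abs_nonneg _) (hCb 0)
  have huv : ‖v - u‖ ≤ 2 * ‖h‖ / ‖a‖ := by
    rw [norm_sub_rev, ← hab]
    exact unit_sub_unit_le a b ha hb
  -- split the difference
  have hsplit : (∫ t in (0:ℝ)..‖a‖, F t) - ∫ t in (0:ℝ)..‖b‖, G t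
      = (∫ t in (0:ℝ)..‖a‖, F t - G t) + ∫ t in ‖b‖..‖a‖, G t := by
    have hadj : (∫ t in (0:ℝ)..‖b‖, G t) + ∫ t in ‖b‖..‖a‖, G t
        = ∫ t in (0:ℝ)..‖a‖, G t := intervalIntegral.integral_add_adjacent_intervals
      (hGc.intervalIntegrable (0:ℝ) ‖b‖) (hGc.intervalIntegrable ‖b‖ ‖a‖)
    rw [intervalIntegral.integral_sub (hFc.intervalIntegrable _ _)
      (hGc.intervalIntegrable _ _)]
    linarith
  have hbound1 : |∫ t in (0:ℝ)..‖a‖, F t - G t| ≤ 3 * (Lip:ℝ) * ‖h‖ * ‖a‖ := by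
    have key : ∀ t ∈ Set.uIoc (0:ℝ) ‖a‖, ‖F t - G t‖ ≤ (Lip:ℝ) * (3 * ‖h‖) := by
      intro t ht
      rw [Set.uIoc_of_le hna.le] at ht
      have ht0 : 0 < t := ht.1
      have hta : t ≤ ‖a‖ := ht.2
      have hdist : ‖F t - G t‖ ≤ (Lip:ℝ) * ‖(z - x - t • u) - (z - x - h - t • v)‖ := by
        have := hLip.dist_le_mul (z - x - t • u) (z - x - h - t • v)
        rwa [dist_eq_norm, dist_eq_norm] at this
      refine hdist.trans ?_
      have heq : (z - x - t • u) - (z - x - h - t • v) = h + (t • v - t • u) := by abel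
      have hn : ‖(z - x - t • u) - (z - x - h - t • v)‖ ≤ ‖h‖ + t * ‖v - u‖ := by
        rw [heq]
        refine (norm_add_le _ _).trans ?_
        rw [← smul_sub, norm_smul, Real.norm_eq_abs, abs_of_pos ht0]
      have htv : t * ‖v - u‖ ≤ 2 * ‖h‖ := by
        calc t * ‖v - u‖ ≤ ‖a‖ * (2 * ‖h‖ / ‖a‖) :=
              mul_le_mul hta huv (norm_nonneg _) hna.le
          _ = 2 * ‖h‖ := by field_simp
      have : ‖(z - x - t • u) - (z - x - h - t • v)‖ ≤ 3 * ‖h‖ := by linarith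
      exact mul_le_mul_of_nonneg_left this Lip.coe_nonneg
    have := intervalIntegral.norm_integral_le_of_norm_le_const key
    rw [Real.norm_eq_abs] at this
    calc |∫ t in (0:ℝ)..‖a‖, F t - G t| ≤ (Lip:ℝ) * (3 * ‖h‖) * |‖a‖ - 0| := this
      _ = 3 * (Lip:ℝ) * ‖h‖ * ‖a‖ := by
          rw [sub_zero, abs_of_pos hna]; ring
  have hbound2 : |∫ t in ‖b‖..‖a‖, G t| ≤ Cb * ‖h‖ := by
    have key : ∀ t ∈ Set.uIoc ‖b‖ ‖a‖, ‖G t‖ ≤ Cb := by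
      intro t _
      rw [Real.norm_eq_abs]
      exact hCb _
    have := intervalIntegral.norm_integral_le_of_norm_le_const key
    rw [Real.norm_eq_abs] at this
    refine this.trans ?_
    have hnn : |‖a‖ - ‖b‖| ≤ ‖h‖ := by
      rw [← hab]; exact abs_norm_sub_norm_le a b
    exact mul_le_mul_of_nonneg_left hnn hCb0
  calc |(∫ t in (0:ℝ)..‖a‖, F t) - ∫ t in (0:ℝ)..‖b‖, G t|
      = |(∫ t in (0:ℝ)..‖a‖, F t - G t) + ∫ t in ‖b‖..‖a‖, G t| := by rw [hsplit]
    _ ≤ |∫ t in (0:ℝ)..‖a‖, F t - G t| + |∫ t in ‖b‖..‖a‖, G t| := abs_add_le _ _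
    _ ≤ 3 * (Lip:ℝ) * ‖h‖ * ‖a‖ + Cb * ‖h‖ := add_le_add hbound1 hbound2
    _ ≤ (|Cb| + 3 * (Lip:ℝ) + 1) * ‖h‖ * (1 + ‖a‖) := by
        have h1 : Cb ≤ |Cb| := le_abs_self Cb
        have h2 : (0:ℝ) ≤ ‖h‖ := norm_nonneg _
        have h3 : (0:ℝ) ≤ (Lip:ℝ) := Lip.coe_nonneg
        have h4 : (0:ℝ) ≤ |Cb| := abs_nonneg _
        nlinarith [mul_nonneg h2 hna.le, mul_nonneg (mul_nonneg h3 h2) hna.le]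
end
end

section
/- Let Ω ⊂ ℝ³ be open, bounded and convex with diameter D, let γ_max > 0, let β : ℝ³ → [0, γ_max] be measurable and vanish outside Ω, let φ : ℝ³ → [0,∞) be continuous with compact support, even, and with ∫_{ℝ³} φ = 1, let u : ℝ³ → [0,∞) be bounded measurable and vanish outside Ω, and let G : S² → [0,∞) be σ-integrable. With s(x,n) = sup{t ≥ 0 : x − t·n ∈ Ω}, define for x ∈ Ω: B(x) = ∫_Ω (β ∗ φ)(η) u(η) (4π |x−η|²)^{−1} exp(−∫_0^{|x−η|} (β ∗ φ)(x − t·(x−η)/|x−η|) dt) dη + ∫_{S²} G(n) exp(−∫_0^{s(x,n)} (β ∗ φ)(x − t·n) dt) dσ(n). Then for every x ∈ Ω: 0 ≤ B(x) ≤ (1 − e^{−D γ_max}) · (ess sup u) + ∫_{S²} G dσ. -/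
open MeasureTheory Real

noncomputable section

/-- The convolution `(β ∗ φ)(y) = ∫ β(ξ) φ(y - ξ) dξ`. -/
def convOp (β φ : E3 → ℝ) (y : E3) : ℝ := ∫ ξ, β ξ * φ (y - ξ)

/-- The exit time `s(z, n) = sup {t ≥ 0 : z - t n ∈ Ω}` of the backward ray from `z`
in direction `-n`. -/
def exitTime (Ω : Set E3) (n z : E3) : ℝ := sSup {t : ℝ | 0 ≤ t ∧ z - t • n ∈ Ω}

/-- The operator `B` from the regularized non-local fixed-point equation. -/
def Bop (Ω : Set E3) (β φ u G : E3 → ℝ) (x : E3) : ℝ :=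
  (∫ η in Ω, convOp β φ η * u η * (4 * π * ‖x - η‖ ^ 2)⁻¹ *
      Real.exp (-(∫ t in (0:ℝ)..‖x - η‖, convOp β φ (x - t • (‖x - η‖⁻¹ • (x - η)))))) +
    ∫ n, G n * Real.exp (-(∫ t in (0:ℝ)..exitTime Ω n x, convOp β φ (x - t • n))) ∂sphereμ

open Convolution in
lemma aux_convOp_continuous {β φ : E3 → ℝ} (hβi : Integrable β volume) (hφc : Continuous φ)
    (hφs : HasCompactSupport φ) : Continuous (convOp β φ) := by
  have h := HasCompactSupport.continuous_convolution_right (L := ContinuousLinearMap.mul ℝ ℝ)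
    hφs hβi.locallyIntegrable hφc
  have he : convOp β φ = convolution β φ (ContinuousLinearMap.mul ℝ ℝ) volume := by
    funext y
    simp [convOp, convolution_def]
  rw [he]; exact h

lemma aux_convOp_nonneg (β φ : E3 → ℝ) (hβ0 : ∀ y, 0 ≤ β y) (hφ0 : ∀ y, 0 ≤ φ y) (y : E3) :
    0 ≤ convOp β φ y :=
  integral_nonneg fun ξ => mul_nonneg (hβ0 ξ) (hφ0 _)

lemma aux_convOp_le {β φ : E3 → ℝ} {γmax : ℝ} (hβm : Measurable β)
    (hβ0 : ∀ y, 0 ≤ β y) (hβle : ∀ y, β y ≤ γmax) (hφc : Continuous φ)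
    (hφs : HasCompactSupport φ) (hφ0 : ∀ y, 0 ≤ φ y) (hφ1 : (∫ y, φ y) = 1)
    (y : E3) : convOp β φ y ≤ γmax := by
  have hφi : Integrable φ volume := hφc.integrable_of_hasCompactSupport hφs
  have hφy : Integrable (fun ξ => φ (y - ξ)) volume := hφi.comp_sub_left y
  have hm : AEStronglyMeasurable (fun ξ => β ξ * φ (y - ξ)) volume :=
    (hβm.mul ((hφc.measurable).comp (measurable_const.sub measurable_id))).aestronglyMeasurable
  have hprod : Integrable (fun ξ => β ξ * φ (y - ξ)) volume := by
    refine Integrable.mono' (hφy.const_mul γmax) hm ?_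
    refine Filter.Eventually.of_forall fun ξ => ?_
    rw [Real.norm_eq_abs, abs_of_nonneg (mul_nonneg (hβ0 ξ) (hφ0 _))]
    exact mul_le_mul_of_nonneg_right (hβle ξ) (hφ0 _)
  calc convOp β φ y ≤ ∫ ξ, γmax * φ (y - ξ) :=
        integral_mono hprod (hφy.const_mul γmax)
          (fun ξ => mul_le_mul_of_nonneg_right (hβle ξ) (hφ0 _))
    _ = γmax * ∫ ξ, φ (y - ξ) := integral_const_mul _ _
    _ = γmax := by rw [integral_sub_left_eq_self φ volume y, hφ1, mul_one]

lemma aux_hasDerivAt {c : E3 → ℝ} (hc : Continuous c) (x n : E3) (r : ℝ) :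
    HasDerivAt (fun s => ∫ t in (0:ℝ)..s, c (x - t • n)) (c (x - r • n)) r := by
  have hqc : Continuous fun t : ℝ => c (x - t • n) :=
    hc.comp (continuous_const.sub (continuous_id.smul continuous_const))
  exact intervalIntegral.integral_hasDerivAt_right (hqc.intervalIntegrable _ _)
    (hqc.stronglyMeasurableAtFilter _ _) hqc.continuousAt

lemma aux_radial {c : E3 → ℝ} (hc : Continuous c) {γmax : ℝ}
    (hcγ : ∀ y, c y ≤ γmax) (x n : E3) {D : ℝ} (hD : 0 ≤ D) :
    (∫ r in (0:ℝ)..D, c (x - r • n) * Real.exp (-(∫ t in (0:ℝ)..r, c (x - t • n))))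
      ≤ 1 - Real.exp (-(D * γmax)) := by
  have hqc : Continuous fun t : ℝ => c (x - t • n) :=
    hc.comp (continuous_const.sub (continuous_id.smul continuous_const))
  set q : ℝ → ℝ := fun t => c (x - t • n) with hq
  set A : ℝ → ℝ := fun r => ∫ t in (0:ℝ)..r, q t with hA
  have hAderiv : ∀ r : ℝ, HasDerivAt A (q r) r := fun r => aux_hasDerivAt hc x n r
  have hAcont : Continuous A :=
    continuous_iff_continuousAt.2 fun r => (hAderiv r).continuousAt
  have key : ∀ r ∈ Set.uIcc (0:ℝ) D,
      HasDerivAt (fun s => -Real.exp (-A s)) (q r * Real.exp (-A r)) r := by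
    intro r _
    have h1 := ((hAderiv r).neg).exp
    have h2 := h1.neg
    have h3 : HasDerivAt (fun s => -Real.exp (-A s)) (-(Real.exp (-A r) * -q r)) r := h2
    convert h3 using 1
    ring
  have hInt : IntervalIntegrable (fun r => q r * Real.exp (-A r)) volume 0 D :=
    (hqc.mul ((hAcont.neg).rexp)).intervalIntegrable _ _
  have hFTC := intervalIntegral.integral_eq_sub_of_hasDerivAt key hInt
  have hA0 : A 0 = 0 := intervalIntegral.integral_same
  have hAD : A D ≤ D * γmax := by
    have := intervalIntegral.integral_mono_on hD (hqc.intervalIntegrable _ _)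
      (intervalIntegrable_const (μ := volume) (c := γmax)) (fun t _ => hcγ _)
    simpa using this
  have hexp : Real.exp (-(D * γmax)) ≤ Real.exp (-A D) := Real.exp_le_exp.2 (by linarith)
  rw [hFTC, hA0]
  simp only [neg_zero, Real.exp_zero]
  linarith

lemma aux_psi_meas {c : E3 → ℝ} (hc : Continuous c) (x : E3) :
    Measurable fun η => ∫ t in (0:ℝ)..‖x - η‖, c (x - t • (‖x - η‖⁻¹ • (x - η))) := by
  have hQm : Measurable fun p : E3 × ℝ =>
      {p : E3 × ℝ | 0 < p.2 ∧ p.2 ≤ ‖x - p.1‖}.indicator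
        (fun p : E3 × ℝ => c (x - p.2 • (‖x - p.1‖⁻¹ • (x - p.1)))) p := by
    have hS : MeasurableSet {p : E3 × ℝ | 0 < p.2 ∧ p.2 ≤ ‖x - p.1‖} := by
      apply MeasurableSet.inter
      · exact measurableSet_lt measurable_const measurable_snd
      · exact measurableSet_le measurable_snd
          ((continuous_const.sub continuous_fst).norm.measurable)
    have hin : Measurable fun p : E3 × ℝ => x - p.2 • (‖x - p.1‖⁻¹ • (x - p.1)) := by
      apply Measurable.const_sub
      apply Measurable.smul measurable_snd
      apply Measurable.smul (f := fun p : E3 × ℝ => ‖x - p.1‖⁻¹) (g := fun p : E3 × ℝ => x - p.1)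
      · exact ((continuous_const.sub continuous_fst).norm.measurable).inv
      · exact (continuous_const.sub continuous_fst).measurable
    exact (hc.measurable.comp hin).indicator hS
  have hsm : StronglyMeasurable fun η => ∫ t,
      ({p : E3 × ℝ | 0 < p.2 ∧ p.2 ≤ ‖x - p.1‖}.indicator
        (fun p : E3 × ℝ => c (x - p.2 • (‖x - p.1‖⁻¹ • (x - p.1))))) (η, t) :=
    hQm.stronglyMeasurable.integral_prod_right'
  have heq : (fun η => ∫ t in (0:ℝ)..‖x - η‖, c (x - t • (‖x - η‖⁻¹ • (x - η)))) =
      fun η => ∫ t,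
      ({p : E3 × ℝ | 0 < p.2 ∧ p.2 ≤ ‖x - p.1‖}.indicator
        (fun p : E3 × ℝ => c (x - p.2 • (‖x - p.1‖⁻¹ • (x - p.1))))) (η, t) := by
    funext η
    rw [intervalIntegral.integral_of_le (norm_nonneg _)]
    rw [← integral_indicator measurableSet_Ioc]
    refine integral_congr_ae (Filter.Eventually.of_forall fun t => ?_)
    by_cases ht : t ∈ Set.Ioc (0:ℝ) ‖x - η‖
    · rw [Set.indicator_of_mem ht]
      exact (Set.indicator_of_mem (show (η, t) ∈ {p : E3 × ℝ | 0 < p.2 ∧ p.2 ≤ ‖x - p.1‖} from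
        ⟨ht.1, ht.2⟩) (fun p : E3 × ℝ => c (x - p.2 • (‖x - p.1‖⁻¹ • (x - p.1))))).symm
    · rw [Set.indicator_of_notMem ht]
      exact (Set.indicator_of_notMem
        (show (η, t) ∉ {p : E3 × ℝ | 0 < p.2 ∧ p.2 ≤ ‖x - p.1‖} from fun hmem => ht ⟨hmem.1, hmem.2⟩)
        (fun p : E3 × ℝ => c (x - p.2 • (‖x - p.1‖⁻¹ • (x - p.1))))).symm
  rw [heq]
  exact hsm.measurable

lemma aux_toSphere : (volume : Measure E3).toSphere Set.univ = ENNReal.ofReal (4 * π) := by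
  rw [Measure.toSphere_apply_univ, EuclideanSpace.volume_ball]
  have h32 : Real.Gamma ((Fintype.card (Fin 3) : ℝ) / 2 + 1) = 3 / 4 * Real.sqrt π := by
    have h1 : ((Fintype.card (Fin 3) : ℝ)) / 2 = 3 / 2 := by norm_num
    have h2 : (3 : ℝ) / 2 = 1 / 2 + 1 := by norm_num
    rw [h1, h2, Real.Gamma_add_one (by norm_num), Real.Gamma_add_one (by norm_num),
      Real.Gamma_one_half_eq]
    ring
  have hs : Real.sqrt π ≠ 0 := ne_of_gt (Real.sqrt_pos.2 pi_pos)
  have hcube : Real.sqrt π ^ Fintype.card (Fin 3) = π * Real.sqrt π := by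
    have : Real.sqrt π ^ 2 = π := Real.sq_sqrt pi_pos.le
    simp only [Fintype.card_fin]
    rw [pow_succ, this]
  rw [h32, hcube]
  have hval : π * Real.sqrt π / (3 / 4 * Real.sqrt π) = 4 / 3 * π := by
    field_simp
  rw [hval]
  have hdim : ((Module.finrank ℝ E3 : ℕ) : ENNReal) = ((3:ℕ) : ENNReal) := by
    norm_num [finrank_euclideanSpace]
  rw [hdim]
  rw [show (((3:ℕ)):ENNReal) = ENNReal.ofReal 3 by simp]
  rw [show ENNReal.ofReal 1 ^ Fintype.card (Fin 3) = 1 by simp,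
    one_mul, ← ENNReal.ofReal_mul (by norm_num)]
  norm_num
  ring_nf
  rw [show (3:ENNReal) = ENNReal.ofReal 3 by simp, show (4:ENNReal) = ENNReal.ofReal 4 by simp,
    ← ENNReal.ofReal_mul (by norm_num : (0:ℝ) ≤ 4 / 3),
    ← ENNReal.ofReal_mul (by positivity : (0:ℝ) ≤ 4 / 3 * π), ← ENNReal.ofReal_mul pi_pos.le]
  congr 1
  ring

lemma aux_inner {γφ : E3 → ℝ} (hγφc : Continuous γφ) (hγφ0 : ∀ y, 0 ≤ γφ y)
    {γmax : ℝ} (hγle : ∀ y, γφ y ≤ γmax) {Ω : Set E3}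
    {D : ℝ} (hD : 0 ≤ D) (hdist : ∀ z ∈ Ω, ∀ w ∈ Ω, dist z w ≤ D)
    (x : E3) {g : E3 → ℝ} (hgm : Measurable g)
    (hg : ∀ η, g η = γφ η * (4 * π * ‖x - η‖ ^ 2)⁻¹ *
        Real.exp (-(∫ t in (0:ℝ)..‖x - η‖, γφ (x - t • (‖x - η‖⁻¹ • (x - η))))))
    (hx : x ∈ Ω) (hΩm : MeasurableSet Ω) (n : Metric.sphere (0:E3) 1) :
    ∫⁻ r : Set.Ioi (0:ℝ), Ω.indicator (fun η => ENNReal.ofReal (g η)) (x - r.1 • (n:E3))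
        ∂(Measure.volumeIoiPow 2)
      ≤ ENNReal.ofReal ((4 * π)⁻¹ * (1 - Real.exp (-(D * γmax)))) := by
  have hn : ‖(n:E3)‖ = 1 := mem_sphere_zero_iff_norm.1 n.2
  set F : E3 → ENNReal := Ω.indicator (fun η => ENNReal.ofReal (g η)) with hF
  have hFm : Measurable F := (ENNReal.measurable_ofReal.comp hgm).indicator hΩm
  set A : ℝ → ℝ := fun r => ∫ t in (0:ℝ)..r, γφ (x - t • (n:E3)) with hA
  have hAcont : Continuous A :=
    continuous_iff_continuousAt.2 fun r => (aux_hasDerivAt hγφc x n r).continuousAt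
  set w : ℝ → ℝ := fun r => (4 * π)⁻¹ * (γφ (x - r • (n:E3)) * Real.exp (-A r)) with hw
  have hwc : Continuous w := by
    apply continuous_const.mul
    exact ((hγφc.comp (continuous_const.sub (continuous_id.smul continuous_const))).mul
      (hAcont.neg.rexp))
  have hd : Measurable fun r : Set.Ioi (0:ℝ) => ENNReal.ofReal (r.1 ^ 2) :=
    (measurable_subtype_coe.pow_const 2).ennreal_ofReal
  have hcomp : Measurable fun r : Set.Ioi (0:ℝ) => F (x - r.1 • (n:E3)) := by
    exact hFm.comp (measurable_const.sub (measurable_subtype_coe.smul measurable_const))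
  rw [Measure.volumeIoiPow, lintegral_withDensity_eq_lintegral_mul _ hd hcomp]
  have hsub := lintegral_subtype_comap (μ := (volume : Measure ℝ)) (measurableSet_Ioi (a := (0:ℝ)))
    (fun r : ℝ => ENNReal.ofReal (r ^ 2) * F (x - r • (n:E3)))
  rw [show ((fun r : Set.Ioi (0:ℝ) => ENNReal.ofReal (r.1 ^ 2)) *
      fun r : Set.Ioi (0:ℝ) => F (x - r.1 • (n:E3))) =
      (fun r : Set.Ioi (0:ℝ) =>
        (fun s : ℝ => ENNReal.ofReal (s ^ 2) * F (x - s • (n:E3))) r.1) from rfl, hsub]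
  have hpt : ∀ r ∈ Set.Ioi (0:ℝ), ENNReal.ofReal (r ^ 2) * F (x - r • (n:E3)) ≤
      (Set.Ioc (0:ℝ) D).indicator (fun r => ENNReal.ofReal (w r)) r := by
    intro r hr
    have hr0 : 0 < r := hr
    by_cases hmem : x - r • (n:E3) ∈ Ω
    · have hdR : dist x (x - r • (n:E3)) = r := by
        rw [dist_eq_norm, sub_sub_cancel, norm_smul, hn, mul_one, Real.norm_eq_abs,
          abs_of_pos hr0]
      have hrD : r ≤ D := by
        have := hdist x hx _ hmem
        rw [hdR] at this; exact this
      have hrIoc : r ∈ Set.Ioc (0:ℝ) D := ⟨hr0, hrD⟩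
      rw [Set.indicator_of_mem hrIoc, hF, Set.indicator_of_mem hmem]
      have hnorm : ‖x - (x - r • (n:E3))‖ = r := by
        rw [sub_sub_cancel, norm_smul, hn, mul_one, Real.norm_eq_abs, abs_of_pos hr0]
      have hdir : ‖x - (x - r • (n:E3))‖⁻¹ • (x - (x - r • (n:E3))) = (n:E3) := by
        rw [sub_sub_cancel, norm_smul, hn, mul_one, Real.norm_eq_abs, abs_of_pos hr0,
          smul_smul, inv_mul_cancel₀ (ne_of_gt hr0), one_smul]
      have hgval : g (x - r • (n:E3)) =
          γφ (x - r • (n:E3)) * (4 * π * r ^ 2)⁻¹ * Real.exp (-A r) := by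
        rw [hg, hdir, hnorm]
      rw [hgval, ← ENNReal.ofReal_mul (sq_nonneg r)]
      apply ENNReal.ofReal_le_ofReal
      have hrne : r ≠ 0 := ne_of_gt hr0
      have hπ : (π : ℝ) ≠ 0 := ne_of_gt pi_pos
      rw [hw]
      have : r ^ 2 * (γφ (x - r • (n:E3)) * (4 * π * r ^ 2)⁻¹ * Real.exp (-A r)) =
          (4 * π)⁻¹ * (γφ (x - r • (n:E3)) * Real.exp (-A r)) := by
        field_simp
      rw [this]
    · rw [hF, Set.indicator_of_notMem hmem, mul_zero]
      exact zero_le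
  calc ∫⁻ r in Set.Ioi (0:ℝ), ENNReal.ofReal (r ^ 2) * F (x - r • (n:E3)) ∂volume
      ≤ ∫⁻ r in Set.Ioi (0:ℝ),
          (Set.Ioc (0:ℝ) D).indicator (fun r => ENNReal.ofReal (w r)) r ∂volume := by
        apply setLIntegral_mono' measurableSet_Ioi hpt
    _ ≤ ∫⁻ r, (Set.Ioc (0:ℝ) D).indicator (fun r => ENNReal.ofReal (w r)) r ∂volume :=
        setLIntegral_le_lintegral _ _
    _ = ∫⁻ r in Set.Ioc (0:ℝ) D, ENNReal.ofReal (w r) ∂volume := by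
        rw [lintegral_indicator measurableSet_Ioc]
    _ = ENNReal.ofReal (∫ r in Set.Ioc (0:ℝ) D, w r ∂volume) := by
        rw [← ofReal_integral_eq_lintegral_ofReal]
        · exact (hwc.integrableOn_Ioc)
        · refine Filter.Eventually.of_forall fun r => ?_
          exact mul_nonneg (by positivity) (mul_nonneg (hγφ0 _) (Real.exp_nonneg _))
    _ ≤ ENNReal.ofReal ((4 * π)⁻¹ * (1 - Real.exp (-(D * γmax)))) := by
        apply ENNReal.ofReal_le_ofReal
        rw [← intervalIntegral.integral_of_le hD]
        rw [hw]
        rw [intervalIntegral.integral_const_mul]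
        apply mul_le_mul_of_nonneg_left _ (by positivity)
        exact aux_radial hγφc hγle x (n:E3) hD

lemma aux_main_lintegral {γφ : E3 → ℝ} (hγφc : Continuous γφ) (hγφ0 : ∀ y, 0 ≤ γφ y)
    {γmax : ℝ} (hγle : ∀ y, γφ y ≤ γmax) {Ω : Set E3} (hΩm : MeasurableSet Ω)
    {D : ℝ} (hD : 0 ≤ D) (hDγ : 0 ≤ D * γmax) (hdist : ∀ z ∈ Ω, ∀ w ∈ Ω, dist z w ≤ D)
    {x : E3} (hx : x ∈ Ω) {g : E3 → ℝ} (hgm : Measurable g)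
    (hg : ∀ η, g η = γφ η * (4 * π * ‖x - η‖ ^ 2)⁻¹ *
        Real.exp (-(∫ t in (0:ℝ)..‖x - η‖, γφ (x - t • (‖x - η‖⁻¹ • (x - η)))))) :
    ∫⁻ η in Ω, ENNReal.ofReal (g η) ∂volume ≤
      ENNReal.ofReal (1 - Real.exp (-(D * γmax))) := by
  set F : E3 → ENNReal := Ω.indicator (fun η => ENNReal.ofReal (g η)) with hF
  have hFm : Measurable F := (ENNReal.measurable_ofReal.comp hgm).indicator hΩm
  have h1 : ∫⁻ η in Ω, ENNReal.ofReal (g η) ∂volume = ∫⁻ η, F η ∂volume :=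
    (lintegral_indicator hΩm _).symm
  have hmp : MeasurePreserving (fun y : E3 => x - y) volume volume :=
    ⟨measurable_const.sub measurable_id, Measure.map_sub_left_eq_self volume x⟩
  have h2 : ∫⁻ η, F η ∂volume = ∫⁻ y, F (x - y) ∂volume :=
    (hmp.lintegral_comp_emb (MeasurableEquiv.subLeft x).measurableEmbedding F).symm
  have hnull : ({(0:E3)}ᶜ : Set E3) =ᵐ[volume] Set.univ := by
    rw [Filter.eventuallyEq_set]
    have : volume ({(0:E3)} : Set E3) = 0 := measure_singleton 0
    filter_upwards [measure_eq_zero_iff_ae_notMem.1 this] with y hy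
    simp [hy]
  have h3 : ∫⁻ y, F (x - y) ∂volume = ∫⁻ y in ({(0:E3)}ᶜ : Set E3), F (x - y) ∂volume := by
    rw [Measure.restrict_congr_set hnull, Measure.restrict_univ]
  have h4 : ∫⁻ y in ({(0:E3)}ᶜ : Set E3), F (x - y) ∂volume =
      ∫⁻ z : ({(0:E3)}ᶜ : Set E3), F (x - ↑z) ∂(volume.comap Subtype.val) :=
    (lintegral_subtype_comap (measurableSet_singleton (0:E3)).compl
      (fun y : E3 => F (x - y))).symm
  have hmp2 := (volume : Measure E3).measurePreserving_homeomorphUnitSphereProd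
  have hdim : Module.finrank ℝ E3 - 1 = 2 := by simp [finrank_euclideanSpace]
  rw [hdim] at hmp2
  set K : Metric.sphere (0:E3) 1 × Set.Ioi (0:ℝ) → ENNReal :=
    fun p => F (x - p.2.1 • (p.1 : E3)) with hK
  have h5 : ∫⁻ z : ({(0:E3)}ᶜ : Set E3), F (x - ↑z) ∂(volume.comap Subtype.val) =
      ∫⁻ p, K p ∂(((volume : Measure E3).toSphere).prod (Measure.volumeIoiPow 2)) := by
    rw [← hmp2.lintegral_comp_emb (Homeomorph.measurableEmbedding _) K]
    apply lintegral_congr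
    intro z
    have hz : (z : E3) ≠ 0 := z.2
    simp only [hK, homeomorphUnitSphereProd_apply_fst_coe,
      homeomorphUnitSphereProd_apply_snd_coe]
    rw [smul_inv_smul₀ (norm_ne_zero_iff.2 hz)]
  have hKm : Measurable K :=
    hFm.comp (measurable_const.sub ((measurable_subtype_coe.comp measurable_snd).smul
      (measurable_subtype_coe.comp measurable_fst)))
  have h6 := lintegral_prod (μ := (volume : Measure E3).toSphere) (ν := Measure.volumeIoiPow 2) K hKm.aemeasurable
  have h7 : ∀ n : Metric.sphere (0:E3) 1,
      ∫⁻ r : Set.Ioi (0:ℝ), K (n, r) ∂(Measure.volumeIoiPow 2) ≤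
        ENNReal.ofReal ((4 * π)⁻¹ * (1 - Real.exp (-(D * γmax)))) :=
    fun n => aux_inner hγφc hγφ0 hγle hD hdist x hgm hg hx hΩm n
  have hmulval : (4 * π)⁻¹ * (1 - Real.exp (-(D * γmax))) * (4 * π) =
      1 - Real.exp (-(D * γmax)) := by
    have hπ : (π : ℝ) ≠ 0 := ne_of_gt pi_pos
    field_simp
  have hcnn : 0 ≤ (4 * π)⁻¹ * (1 - Real.exp (-(D * γmax))) := by
    apply mul_nonneg (by positivity)
    have : Real.exp (-(D * γmax)) ≤ Real.exp 0 := Real.exp_le_exp.2 (by linarith)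
    simp only [Real.exp_zero] at this
    linarith
  calc ∫⁻ η in Ω, ENNReal.ofReal (g η) ∂volume
      = ∫⁻ p, K p ∂(((volume : Measure E3).toSphere).prod (Measure.volumeIoiPow 2)) := by
        rw [h1, h2, h3, h4, h5]
    _ = ∫⁻ n, ∫⁻ r, K (n, r) ∂(Measure.volumeIoiPow 2) ∂((volume : Measure E3).toSphere) := h6
    _ ≤ ∫⁻ _, ENNReal.ofReal ((4 * π)⁻¹ * (1 - Real.exp (-(D * γmax))))
          ∂((volume : Measure E3).toSphere) := lintegral_mono h7
    _ = ENNReal.ofReal ((4 * π)⁻¹ * (1 - Real.exp (-(D * γmax)))) *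
          (volume : Measure E3).toSphere Set.univ := lintegral_const _
    _ = ENNReal.ofReal (1 - Real.exp (-(D * γmax))) := by
        rw [aux_toSphere, ← ENNReal.ofReal_mul hcnn, hmulval]

theorem stmt17 (Ω : Set E3) (hΩo : IsOpen Ω) (hΩb : Bornology.IsBounded Ω)
    (hΩc : Convex ℝ Ω) (γmax : ℝ) (hγ : 0 < γmax)
    (β : E3 → ℝ) (hβm : Measurable β) (hβ : ∀ y, 0 ≤ β y ∧ β y ≤ γmax)
    (hβ0 : ∀ y, y ∉ Ω → β y = 0)
    (φ : E3 → ℝ) (hφc : Continuous φ) (hφs : HasCompactSupport φ)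
    (hφe : ∀ y, φ (-y) = φ y) (hφ0 : ∀ y, 0 ≤ φ y) (hφ1 : (∫ y, φ y) = 1)
    (u : E3 → ℝ) (hum : Measurable u) (hu0 : ∀ y, 0 ≤ u y)
    (hub : ∃ Cu : ℝ, ∀ y, u y ≤ Cu) (huΩ : ∀ y, y ∉ Ω → u y = 0)
    (G : E3 → ℝ) (hG0 : ∀ n : E3, 0 ≤ G n) (hGi : Integrable G sphereμ)
    (x : E3) (hx : x ∈ Ω) :
    0 ≤ Bop Ω β φ u G x ∧
      Bop Ω β φ u G x ≤
        (1 - Real.exp (-(Metric.diam Ω * γmax))) * essSup u volume +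
          ∫ n, G n ∂sphereμ := by
  have hΩm : MeasurableSet Ω := hΩo.measurableSet
  set γφ : E3 → ℝ := convOp β φ with hγφdef
  have hγφ0 : ∀ y, 0 ≤ γφ y := aux_convOp_nonneg β φ (fun y => (hβ y).1) hφ0
  -- β is integrable
  have hβi : Integrable β volume := by
    have hμΩ : volume Ω < ⊤ :=
      lt_of_le_of_lt (measure_mono subset_closure)
        (hΩb.isCompact_closure.measure_lt_top)
    have hind : Integrable (Ω.indicator fun _ => γmax) volume := by
      rw [integrable_indicator_iff hΩm]
      exact integrableOn_const hμΩ.ne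
    refine Integrable.mono' hind hβm.aestronglyMeasurable ?_
    refine Filter.Eventually.of_forall fun y => ?_
    rw [Real.norm_eq_abs, abs_of_nonneg (hβ y).1]
    by_cases hy : y ∈ Ω
    · rw [Set.indicator_of_mem hy]; exact (hβ y).2
    · rw [Set.indicator_of_notMem hy, hβ0 y hy]
  have hγφc : Continuous γφ := aux_convOp_continuous hβi hφc hφs
  have hγle : ∀ y, γφ y ≤ γmax :=
    fun y => aux_convOp_le hβm (fun y => (hβ y).1) (fun y => (hβ y).2) hφc hφs hφ0 hφ1 y
  set D : ℝ := Metric.diam Ω with hDdef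
  have hD : 0 ≤ D := Metric.diam_nonneg
  have hdist : ∀ z ∈ Ω, ∀ w ∈ Ω, dist z w ≤ D :=
    fun z hz w hw => Metric.dist_le_diam_of_mem hΩb hz hw
  set c1 : ℝ := 1 - Real.exp (-(D * γmax)) with hc1def
  have hc10 : 0 ≤ c1 := by
    have : Real.exp (-(D * γmax)) ≤ Real.exp 0 :=
      Real.exp_le_exp.2 (by nlinarith)
    simp only [Real.exp_zero] at this
    simp only [hc1def]
    linarith
  -- essSup bounds
  obtain ⟨Cu, hCu⟩ := hub
  have hbdd : Filter.IsBoundedUnder (· ≤ ·) (ae (volume : Measure E3)) u :=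
    Filter.isBoundedUnder_of ⟨Cu, fun y => hCu y⟩
  set M : ℝ := essSup u volume with hMdef
  have huM : ∀ᵐ y ∂(volume : Measure E3), u y ≤ M := ae_le_essSup hbdd
  have hM0 : 0 ≤ M := by
    obtain ⟨y, hy⟩ := huM.exists
    exact le_trans (hu0 y) hy
  -- the function ψ and g
  set ψ : E3 → ℝ := fun η =>
    ∫ t in (0:ℝ)..‖x - η‖, γφ (x - t • (‖x - η‖⁻¹ • (x - η))) with hψdef
  have hψm : Measurable ψ := aux_psi_meas hγφc x
  set g : E3 → ℝ := fun η => γφ η * (4 * π * ‖x - η‖ ^ 2)⁻¹ * Real.exp (-ψ η) with hgdef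
  have hkm : Measurable fun η : E3 => (4 * π * ‖x - η‖ ^ 2)⁻¹ := by
    have : Continuous fun η : E3 => 4 * π * ‖x - η‖ ^ 2 := by
      apply continuous_const.mul
      exact ((continuous_const.sub continuous_id).norm.pow 2)
    exact this.measurable.inv
  have hgm : Measurable g :=
    (hγφc.measurable.mul hkm).mul (Real.measurable_exp.comp hψm.neg)
  have hg : ∀ η, g η = γφ η * (4 * π * ‖x - η‖ ^ 2)⁻¹ *
      Real.exp (-(∫ t in (0:ℝ)..‖x - η‖, γφ (x - t • (‖x - η‖⁻¹ • (x - η))))) := fun η => rfl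
  have hg0 : ∀ η, 0 ≤ g η := fun η =>
    mul_nonneg (mul_nonneg (hγφ0 η) (inv_nonneg.2 (by positivity))) (Real.exp_nonneg _)
  -- the lintegral bound
  have hkey : ∫⁻ η in Ω, ENNReal.ofReal (g η) ∂volume ≤ ENNReal.ofReal c1 :=
    aux_main_lintegral hγφc hγφ0 hγle hΩm hD (mul_nonneg hD hγ.le) hdist hx hgm hg
  -- term 1
  set f1 : E3 → ℝ := fun η => γφ η * u η * (4 * π * ‖x - η‖ ^ 2)⁻¹ * Real.exp (-ψ η) with hf1def
  have hf10 : ∀ η, 0 ≤ f1 η := fun η =>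
    mul_nonneg (mul_nonneg (mul_nonneg (hγφ0 η) (hu0 η)) (inv_nonneg.2 (by positivity)))
      (Real.exp_nonneg _)
  have hT1 : (∫ η in Ω, f1 η ∂volume) ≤ c1 * M := by
    by_cases hfi : Integrable f1 (volume.restrict Ω)
    · rw [integral_eq_lintegral_of_nonneg_ae (Filter.Eventually.of_forall hf10)
        hfi.aestronglyMeasurable]
      have hchain : ∫⁻ η in Ω, ENNReal.ofReal (f1 η) ∂volume ≤
          ENNReal.ofReal M * ENNReal.ofReal c1 := by
        calc ∫⁻ η in Ω, ENNReal.ofReal (f1 η) ∂volume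
            ≤ ∫⁻ η in Ω, ENNReal.ofReal M * ENNReal.ofReal (g η) ∂volume := by
              apply lintegral_mono_ae
              filter_upwards [ae_restrict_of_ae huM] with η hη
              rw [← ENNReal.ofReal_mul hM0]
              apply ENNReal.ofReal_le_ofReal
              have h0 : 0 ≤ γφ η * ((4 * π * ‖x - η‖ ^ 2)⁻¹ * Real.exp (-ψ η)) :=
                mul_nonneg (hγφ0 η)
                  (mul_nonneg (inv_nonneg.2 (by positivity)) (Real.exp_nonneg _))
              calc f1 η = (γφ η * ((4 * π * ‖x - η‖ ^ 2)⁻¹ * Real.exp (-ψ η))) * u η := by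
                    rw [hf1def]; ring
                _ ≤ (γφ η * ((4 * π * ‖x - η‖ ^ 2)⁻¹ * Real.exp (-ψ η))) * M :=
                    mul_le_mul_of_nonneg_left hη h0
                _ = M * g η := by rw [hgdef]; ring
          _ = ENNReal.ofReal M * ∫⁻ η in Ω, ENNReal.ofReal (g η) ∂volume :=
              lintegral_const_mul' _ _ ENNReal.ofReal_ne_top
          _ ≤ ENNReal.ofReal M * ENNReal.ofReal c1 := mul_le_mul_right hkey _
      calc (∫⁻ η in Ω, ENNReal.ofReal (f1 η) ∂volume).toReal
          ≤ (ENNReal.ofReal M * ENNReal.ofReal c1).toReal := by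
            apply ENNReal.toReal_mono _ hchain
            exact ENNReal.mul_ne_top ENNReal.ofReal_ne_top ENNReal.ofReal_ne_top
        _ = M * c1 := by
            rw [← ENNReal.ofReal_mul hM0, ENNReal.toReal_ofReal (mul_nonneg hM0 hc10)]
        _ = c1 * M := mul_comm _ _
    · rw [integral_undef hfi]
      exact mul_nonneg hc10 hM0
  -- term 2
  have hT2 : (∫ n, G n * Real.exp (-(∫ t in (0:ℝ)..exitTime Ω n x, γφ (x - t • n)))
      ∂sphereμ) ≤ ∫ n, G n ∂sphereμ := by
    apply integral_mono_of_nonneg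
    · exact Filter.Eventually.of_forall fun n => mul_nonneg (hG0 n) (Real.exp_nonneg _)
    · exact hGi
    · refine Filter.Eventually.of_forall fun n => ?_
      have hs0 : 0 ≤ exitTime Ω n x :=
        Real.sSup_nonneg' ⟨0, ⟨le_rfl, by simpa using hx⟩, le_rfl⟩
      have hnn : 0 ≤ ∫ t in (0:ℝ)..exitTime Ω n x, γφ (x - t • n) :=
        intervalIntegral.integral_nonneg hs0 (fun t _ => hγφ0 _)
      have hle1 : Real.exp (-(∫ t in (0:ℝ)..exitTime Ω n x, γφ (x - t • n))) ≤ 1 := by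
        rw [← Real.exp_zero]
        exact Real.exp_le_exp.2 (by linarith)
      calc G n * Real.exp (-(∫ t in (0:ℝ)..exitTime Ω n x, γφ (x - t • n))) ≤ G n * 1 :=
            mul_le_mul_of_nonneg_left hle1 (hG0 n)
        _ = G n := mul_one _
  have hT20 : 0 ≤ ∫ n, G n * Real.exp (-(∫ t in (0:ℝ)..exitTime Ω n x, γφ (x - t • n)))
      ∂sphereμ := integral_nonneg fun n => mul_nonneg (hG0 n) (Real.exp_nonneg _)
  have hT10 : 0 ≤ ∫ η in Ω, f1 η ∂volume := integral_nonneg hf10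
  have hBop : Bop Ω β φ u G x = (∫ η in Ω, f1 η ∂volume) +
      ∫ n, G n * Real.exp (-(∫ t in (0:ℝ)..exitTime Ω n x, γφ (x - t • n))) ∂sphereμ := rfl
  constructor
  · rw [hBop]
    exact add_nonneg hT10 hT20
  · rw [hBop]
    exact add_le_add hT1 hT2
end
end

section
/- For all positive real numbers h, c, k and T: ∫_0^∞ (2 h ν³ / c²) · (e^{hν/(kT)} − 1)^{−1} dν = σ T⁴, where σ = 2π⁴k⁴/(15 h³ c²). Equivalently, ∫_0^∞ x³/(e^x − 1) dx = π⁴/15. -/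
open MeasureTheory Real Set Complex

noncomputable section

lemma key : (∫ x in Set.Ioi (0:ℝ), x ^ 3 / (Real.exp x - 1)) = π ^ 4 / 15 := by
  have hs : (0:ℝ) < (4:ℂ).re := by norm_num
  have hmain := hasSum_mellin (ι := ℕ) (a := fun _ => (1:ℂ))
      (p := fun n => (n:ℝ) + 1) (F := fun t => ((Real.exp t - 1)⁻¹ : ℝ)) (s := 4)
      (fun i => Or.inr (by positivity)) hs ?_ ?_
  · have hmel : mellin (fun t => (((Real.exp t - 1)⁻¹ : ℝ) : ℂ)) 4
        = ((∫ x in Set.Ioi (0:ℝ), x ^ 3 / (Real.exp x - 1) : ℝ) : ℂ) := by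
      rw [mellin,
        show (∫ t in Ioi (0:ℝ), (t:ℂ) ^ ((4:ℂ) - 1) • ((((Real.exp t - 1)⁻¹ : ℝ)) : ℂ))
          = ∫ t in Ioi (0:ℝ), ((t ^ 3 / (Real.exp t - 1) : ℝ) : ℂ) from ?_]
      · exact integral_ofReal
      refine setIntegral_congr_fun measurableSet_Ioi (fun t ht => ?_)
      have h3 : ((t:ℂ)) ^ ((4:ℂ) - 1) = ((t ^ 3 : ℝ) : ℂ) := by
        rw [(by norm_num : (4:ℂ) - 1 = ((3:ℕ):ℂ)), Complex.cpow_natCast]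
        push_cast; ring
      simp [smul_eq_mul, h3, div_eq_mul_inv]
    rw [hmel] at hmain
    have hζ : riemannZeta 4 = ∑' n : ℕ, 1 / ((n:ℂ) + 1) ^ (4:ℂ) :=
      zeta_eq_tsum_one_div_nat_add_one_cpow (by norm_num)
    have hΓ : Complex.Gamma 4 = 6 := by
      rw [(by norm_num : (4:ℂ) = ((3:ℕ):ℂ) + 1), Complex.Gamma_nat_eq_factorial]
      norm_num [Nat.factorial]
    have hsum := hmain.tsum_eq
    rw [hΓ] at hsum
    have heq : (∑' n : ℕ, 6 * 1 / (((n:ℝ) + 1 : ℝ) : ℂ) ^ (4:ℂ))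
        = 6 * riemannZeta 4 := by
      rw [hζ, ← tsum_mul_left]
      congr 1; ext n; push_cast; ring
    rw [heq, riemannZeta_four] at hsum
    have hfin := hsum.symm
    rw [(by push_cast; ring : 6 * ((π:ℂ) ^ 4 / 90) = ((π ^ 4 / 15 : ℝ) : ℂ))] at hfin
    exact_mod_cast hfin
  · intro t ht
    have ht0 : 0 < t := ht
    have ht' : Real.exp (-t) < 1 := Real.exp_lt_one_iff.mpr (by linarith)
    have h0 : (0:ℝ) ≤ Real.exp (-t) := (Real.exp_pos _).le
    have hgeo := (hasSum_geometric_of_lt_one h0 ht').mul_left (Real.exp (-t))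
    have heq : Real.exp (-t) * (1 - Real.exp (-t))⁻¹ = (Real.exp t - 1)⁻¹ := by
      rw [Real.exp_neg]
      have h1 : (0:ℝ) < Real.exp t := Real.exp_pos t
      have h2 : Real.exp t - 1 > 0 := by
        linarith [Real.add_one_lt_exp ht0.ne']
      field_simp
    rw [heq] at hgeo
    have hgeo2 : HasSum (fun n : ℕ => Real.exp (-((n:ℝ) + 1) * t)) (Real.exp t - 1)⁻¹ := by
      have hfun : (fun n : ℕ => Real.exp (-((n:ℝ) + 1) * t))
          = fun i : ℕ => Real.exp (-t) * Real.exp (-t) ^ i := by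
        funext n
        rw [← Real.exp_nat_mul, ← Real.exp_add]
        ring_nf
      rw [hfun]; exact hgeo
    have := hasSum_ofReal.mpr hgeo2
    simpa using this
  · simp only [norm_one]
    have h4 : ∀ n : ℕ, ((n:ℝ) + 1) ^ ((4:ℂ).re) = ((n:ℝ) + 1) ^ (4:ℕ) := by
      intro n
      rw [(by norm_num : ((4:ℂ)).re = ((4:ℕ):ℝ)), Real.rpow_natCast]
    simp_rw [h4]
    have : Summable fun n : ℕ => 1 / ((n:ℝ)) ^ (4:ℕ) :=
      summable_one_div_nat_pow.mpr (by norm_num)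
    have := (summable_nat_add_iff 1).mpr this
    refine this.congr (fun n => ?_)
    push_cast; ring

/-- The Stefan–Boltzmann law: the Planck black-body emission integrates to `σ T⁴`
with `σ = 2π⁴k⁴/(15 h³ c²)`; equivalently, `∫_0^∞ x³/(eˣ - 1) dx = π⁴/15`. -/
theorem stmt19 (hP c k T : ℝ) (h1 : 0 < hP) (h2 : 0 < c) (h3 : 0 < k) (h4 : 0 < T) :
    (∫ ν in Set.Ioi (0:ℝ),
        (2 * hP * ν ^ 3 / c ^ 2) * (Real.exp (hP * ν / (k * T)) - 1)⁻¹)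
      = (2 * π ^ 4 * k ^ 4 / (15 * hP ^ 3 * c ^ 2)) * T ^ 4 ∧
    (∫ x in Set.Ioi (0:ℝ), x ^ 3 / (Real.exp x - 1)) = π ^ 4 / 15 := by
  refine ⟨?_, key⟩
  set a : ℝ := hP / (k * T) with ha_def
  have ha : 0 < a := by positivity
  set G : ℝ → ℝ := fun x => (2 * hP * (a⁻¹) ^ 3 / c ^ 2) * (x ^ 3 / (Real.exp x - 1))
    with hG_def
  have hcongr : (∫ ν in Set.Ioi (0:ℝ),
      (2 * hP * ν ^ 3 / c ^ 2) * (Real.exp (hP * ν / (k * T)) - 1)⁻¹)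
      = ∫ ν in Set.Ioi (0:ℝ), G (a * ν) := by
    refine setIntegral_congr_fun measurableSet_Ioi (fun ν hν => ?_)
    have : hP * ν / (k * T) = a * ν := by rw [ha_def]; ring
    rw [this, hG_def]
    simp only
    have hane : a ≠ 0 := ha.ne'
    have hcne : c ≠ 0 := h2.ne'
    set B := (Real.exp (a * ν) - 1)⁻¹ with hB
    rw [div_eq_mul_inv ((a * ν) ^ 3), ← hB, mul_pow]
    field_simp
  rw [hcongr, integral_comp_mul_left_Ioi G 0 ha, mul_zero]
  rw [hG_def]
  simp only
  rw [MeasureTheory.integral_const_mul, key]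
  have hk : k * T ≠ 0 := by positivity
  rw [ha_def]
  rw [smul_eq_mul]
  field_simp
end
end
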